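/- arXiv:2604.01026 — 7 statements merged into one kernel-verified Lean document; each statement's English description precedes it below -/
import Mathlib

section
/- For skew-adjoint matrices C_1, ..., C_r and every q ≥ 1 and h ≥ 0, ‖e^{hC_r}···e^{hC_1} − e^{h(C_1+···+C_r)}‖ ≤ Σ_{n=1}^{q} h^n ‖Σ_{j_1+···+j_r=n} C_r^{j_r}···C_1^{j_1}/(j_r!···j_1!) − (C_1+···+C_r)^n/n!‖ + h^{q+1}/(q+1)! · ((‖C_1‖+···+‖C_r‖)^{q+1} + ‖C_1+···+C_r‖^{q+1}). -/
open scoped Matrix Matrix.Norms.L2Operator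
open NormedSpace

namespace ExpProdAux

open Finset Function Set

/-! ### Combinatorial lemmas about the weights `(∏ (j i)!)⁻¹` on `antidiagonalTuple` -/

noncomputable def W {r : ℕ} (j : Fin r → ℕ) : ℝ :=
  (((∏ i, (j i).factorial : ℕ) : ℝ))⁻¹

lemma W_nonneg {r : ℕ} (j : Fin r → ℕ) : 0 ≤ W j := by
  unfold W; positivity

lemma prod_fact_update_eq {r : ℕ} (j : Fin r → ℕ) (i0 : Fin r) (v : ℕ) :
    ∏ i, (Function.update j i0 v i).factorial
      = v.factorial * ∏ i ∈ univ \ {i0}, (j i).factorial := by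
  rw [← Finset.prod_update_of_mem (mem_univ i0) (fun i => (j i).factorial)]
  refine Finset.prod_congr rfl fun i _ => ?_
  rcases eq_or_ne i i0 with rfl | hi
  · simp
  · simp [Function.update_apply, hi]

lemma fact_prod_update {r : ℕ} (j : Fin r → ℕ) (i0 : Fin r) (h0 : j i0 ≠ 0) :
    W (Function.update j i0 (j i0 - 1)) = (j i0 : ℝ) * W j := by
  unfold W
  have h2 : ∏ i, (j i).factorial
      = j i0 * ((j i0 - 1).factorial * ∏ i ∈ univ \ {i0}, (j i).factorial) := by
    rw [← mul_assoc, Nat.mul_factorial_pred h0]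
    have := prod_fact_update_eq j i0 (j i0)
    rw [Function.update_eq_self] at this
    rw [this]
  rw [prod_fact_update_eq, h2]
  push_cast
  rw [mul_inv]
  have : ((j i0 : ℝ)) ≠ 0 := Nat.cast_ne_zero.mpr h0
  field_simp

/-- The key "Pascal rule" reindexing identity for the weights `W`. -/
lemma key_reindex {V : Type*} [AddCommMonoid V] [Module ℝ V] {r k : ℕ}
    (g : (Fin r → ℕ) → V) :
    ∑ j ∈ Finset.Nat.antidiagonalTuple r k, ∑ i0 : Fin r,
        W j • g (Function.update j i0 (j i0 + 1))
      = ∑ j ∈ Finset.Nat.antidiagonalTuple r (k + 1),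
          ((k + 1 : ℝ) * W j) • g j := by
  classical
  have hRHS : ∀ j' ∈ Finset.Nat.antidiagonalTuple r (k + 1),
      ((k + 1 : ℝ) * W j') • g j'
        = ∑ i0 ∈ univ.filter (fun i => j' i ≠ 0),
            W (Function.update j' i0 (j' i0 - 1)) • g j' := by
    intro j' hj'
    rw [← Finset.sum_smul]
    congr 1
    have heq : ∀ i0 ∈ univ.filter (fun i => j' i ≠ 0),
        W (Function.update j' i0 (j' i0 - 1)) = (j' i0 : ℝ) * W j' := fun i0 hi0 =>
      fact_prod_update j' i0 (by simpa using hi0)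
    rw [Finset.sum_congr rfl heq, ← Finset.sum_mul]
    congr 1
    rw [Finset.sum_filter]
    have h3 : ∑ i : Fin r, (if j' i ≠ 0 then (j' i : ℝ) else 0) = ∑ i : Fin r, (j' i : ℝ) :=
      Finset.sum_congr rfl fun i _ => by rcases eq_or_ne (j' i) 0 with h | h <;> simp [h]
    rw [h3, ← Nat.cast_sum, Finset.Nat.mem_antidiagonalTuple.mp hj']
    push_cast; ring
  rw [Finset.sum_congr rfl hRHS]
  rw [Finset.sum_sigma' (Finset.Nat.antidiagonalTuple r k) (fun _ => univ)
    (fun j i0 => W j • g (Function.update j i0 (j i0 + 1))),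
    Finset.sum_sigma' (Finset.Nat.antidiagonalTuple r (k+1))
    (fun j' => univ.filter (fun i => j' i ≠ 0))
    (fun j' i0 => W (Function.update j' i0 (j' i0 - 1)) • g j')]
  refine Finset.sum_nbij' (fun p => ⟨Function.update p.1 p.2 (p.1 p.2 + 1), p.2⟩)
    (fun p => ⟨Function.update p.1 p.2 (p.1 p.2 - 1), p.2⟩) ?_ ?_ ?_ ?_ ?_
  · rintro ⟨j, i0⟩ hp
    simp only [Finset.mem_sigma, Finset.mem_filter, Finset.mem_univ, true_and, and_true,
      Function.update_self] at hp ⊢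
    have hj := Finset.Nat.mem_antidiagonalTuple.mp hp
    rw [Finset.sum_eq_add_sum_sdiff_singleton_of_mem (mem_univ i0)] at hj
    refine ⟨?_, by omega⟩
    rw [Finset.Nat.mem_antidiagonalTuple, Finset.sum_update_of_mem (mem_univ i0)]
    omega
  · rintro ⟨j, i0⟩ hp
    simp only [Finset.mem_sigma, Finset.mem_filter, Finset.mem_univ, true_and, and_true,
      Function.update_self] at hp ⊢
    obtain ⟨hj, h0⟩ := hp
    have hj := Finset.Nat.mem_antidiagonalTuple.mp hj
    rw [Finset.sum_eq_add_sum_sdiff_singleton_of_mem (mem_univ i0)] at hj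
    rw [Finset.Nat.mem_antidiagonalTuple, Finset.sum_update_of_mem (mem_univ i0)]
    omega
  · rintro ⟨j, i0⟩ hp
    simp only [Sigma.mk.inj_iff, heq_eq_eq, and_true]
    rw [Function.update_idem, Function.update_self]
    have : j i0 + 1 - 1 = j i0 := by omega
    rw [this, Function.update_eq_self]
  · rintro ⟨j, i0⟩ hp
    simp only [Finset.mem_sigma, Finset.mem_filter] at hp
    have h0 : j i0 ≠ 0 := hp.2.2
    simp only [Sigma.mk.inj_iff, heq_eq_eq, and_true]
    rw [Function.update_idem, Function.update_self]
    have : j i0 - 1 + 1 = j i0 := by omega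
    rw [this, Function.update_eq_self]
  · rintro ⟨j, i0⟩ hp
    simp only
    have hcollapse : Function.update (Function.update j i0 (j i0 + 1)) i0
        ((Function.update j i0 (j i0 + 1)) i0 - 1) = j := by
      rw [Function.update_idem, Function.update_self]
      have : j i0 + 1 - 1 = j i0 := by omega
      rw [this, Function.update_eq_self]
    rw [hcollapse]

lemma prod_pow_update {r : ℕ} (x : Fin r → ℝ) (j : Fin r → ℕ) (i0 : Fin r) :
    ∏ i, x i ^ (Function.update j i0 (j i0 + 1) i) = x i0 * ∏ i, x i ^ j i := by
  have h1 : ∏ i, x i ^ (Function.update j i0 (j i0 + 1) i)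
      = x i0 ^ (j i0 + 1) * ∏ i ∈ univ \ {i0}, x i ^ j i := by
    rw [← Finset.prod_update_of_mem (mem_univ i0) (fun i => x i ^ j i)]
    refine Finset.prod_congr rfl fun i _ => ?_
    rcases eq_or_ne i i0 with rfl | hi
    · simp
    · simp [Function.update_apply, hi]
  have h2 : ∏ i, x i ^ j i = x i0 ^ j i0 * ∏ i ∈ univ \ {i0}, x i ^ j i :=
    Finset.prod_eq_mul_prod_sdiff_singleton_of_mem (mem_univ i0) _
  rw [h1, h2, pow_succ']
  ring

/-- The multinomial theorem, in the weight form we need. -/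
lemma sum_W_prod_pow {r : ℕ} (x : Fin r → ℝ) :
    ∀ k : ℕ, ∑ j ∈ Finset.Nat.antidiagonalTuple r k,
        ((k.factorial : ℝ) * W j) * ∏ i, x i ^ j i
      = (∑ i, x i) ^ k := by
  intro k
  induction k with
  | zero =>
    rw [Finset.Nat.antidiagonalTuple_zero_right, Finset.sum_singleton]
    simp [W]
  | succ k ih =>
    calc ∑ j ∈ Finset.Nat.antidiagonalTuple r (k+1),
          (((k+1).factorial : ℝ) * W j) * ∏ i, x i ^ j i
        = (k.factorial : ℝ) * ∑ j ∈ Finset.Nat.antidiagonalTuple r (k+1),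
            (((k : ℝ) + 1) * W j) • (∏ i, x i ^ j i) := by
          rw [Finset.mul_sum]
          refine Finset.sum_congr rfl fun j _ => ?_
          rw [smul_eq_mul, Nat.factorial_succ]
          push_cast; ring
      _ = (k.factorial : ℝ) * ∑ j ∈ Finset.Nat.antidiagonalTuple r k, ∑ i0 : Fin r,
            W j • (∏ i, x i ^ (Function.update j i0 (j i0 + 1) i)) := by
          rw [key_reindex (fun j => ∏ i, x i ^ j i)]
      _ = (∑ i, x i) * ∑ j ∈ Finset.Nat.antidiagonalTuple r k,
            ((k.factorial : ℝ) * W j) * ∏ i, x i ^ j i := by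
          rw [Finset.mul_sum, Finset.mul_sum]
          refine Finset.sum_congr rfl fun j _ => ?_
          have hin : ∀ i0 : Fin r, W j • (∏ i, x i ^ (Function.update j i0 (j i0 + 1) i))
              = x i0 * (W j * ∏ i, x i ^ j i) := by
            intro i0
            rw [smul_eq_mul, prod_pow_update]
            ring
          rw [Finset.sum_congr rfl fun i0 _ => hin i0, ← Finset.sum_mul]
          ring
      _ = (∑ i, x i) ^ (k + 1) := by rw [ih, ← pow_succ']

/-! ### Derivative of a reversed product of functions -/

lemma hasDerivAt_ofFn_reverse_prod {E : Type*} [NormedRing E] [NormedAlgebra ℝ E] :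
    ∀ (r : ℕ) (F F' : Fin r → ℝ → E) (s : ℝ),
    (∀ i, HasDerivAt (F i) (F' i s) s) →
    HasDerivAt (fun t => (List.ofFn fun i => F i t).reverse.prod)
      (∑ i0 : Fin r, (List.ofFn fun i => if i = i0 then F' i s else F i s).reverse.prod) s := by
  intro r
  induction r with
  | zero =>
    intro F F' s hF
    simp only [List.ofFn_zero, List.reverse_nil, List.prod_nil, Finset.univ_eq_empty,
      Finset.sum_empty]
    exact hasDerivAt_const s 1
  | succ r ih =>
    intro F F' s hF
    have hlist : ∀ (G : Fin (r+1) → E),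
        (List.ofFn G).reverse.prod = (List.ofFn fun i : Fin r => G i.succ).reverse.prod * G 0 := by
      intro G
      rw [List.ofFn_succ]
      simp
    have htail := ih (fun i => F i.succ) (fun i => F' i.succ) s (fun i => hF i.succ)
    have hmul := htail.mul (hF 0)
    have heq : (fun t => (List.ofFn fun i : Fin (r+1) => F i t).reverse.prod)
        = fun t => (List.ofFn fun i : Fin r => F i.succ t).reverse.prod * F 0 t := by
      funext t; exact hlist _
    rw [heq]
    convert hmul using 1
    · rfl
    rw [Fin.sum_univ_succ]
    rw [Finset.sum_mul]
    have h0 : (List.ofFn fun i : Fin (r+1) => if i = 0 then F' i s else F i s).reverse.prod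
        = (List.ofFn fun i : Fin r => F i.succ s).reverse.prod * F' 0 s := by
      rw [hlist]
      simp [Fin.succ_ne_zero]
    have hsucc : ∀ i0 : Fin r,
        (List.ofFn fun i : Fin (r+1) => if i = i0.succ then F' i s else F i s).reverse.prod
          = (List.ofFn fun i : Fin r => if i = i0 then F' i.succ s else F i.succ s).reverse.prod
              * F 0 s := by
      intro i0
      rw [hlist]
      simp only [Fin.succ_inj]
      congr 1
    rw [h0, Finset.sum_congr rfl fun i0 _ => hsucc i0]
    rw [add_comm]

/-! ### Sharp Taylor remainder bound -/

lemma norm_le_of_deriv_le {E : Type*} [NormedAddCommGroup E] [NormedSpace ℝ E]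
    {R R' : ℝ → E} {CC h : ℝ} {p : ℕ}
    (hR : ∀ s, HasDerivAt R (R' s) s) (hR0 : R 0 = 0)
    (hb : ∀ s ∈ Icc (0:ℝ) h, ‖R' s‖ ≤ CC * s ^ p / p.factorial) :
    ∀ t ∈ Icc (0:ℝ) h, ‖R t‖ ≤ CC * t ^ (p+1) / (p+1).factorial := by
  have hBd : ∀ x : ℝ, HasDerivAt (fun t => CC * t ^ (p+1) / (p+1).factorial)
      (CC * x ^ p / p.factorial) x := by
    intro x
    have : HasDerivAt (fun t : ℝ => t ^ (p+1)) ((p+1) * x ^ p) x := by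
      simpa using hasDerivAt_pow (p+1) x
    have h2 := (this.const_mul CC).div_const ((p+1).factorial : ℝ)
    refine h2.congr_deriv ?_
    have hp : ((p+1).factorial : ℝ) = (p+1) * p.factorial := by
      rw [Nat.factorial_succ]; push_cast; ring
    rw [hp]
    have h1 : (p.factorial : ℝ) ≠ 0 := Nat.cast_ne_zero.mpr p.factorial_ne_zero
    have h3 : ((p:ℝ)+1) ≠ 0 := by positivity
    field_simp
  have := image_norm_le_of_norm_deriv_right_le_deriv_boundary
    (f := R) (f' := R') (a := 0) (b := h)
    (fun x _ => (hR x).continuousAt.continuousWithinAt)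
    (fun x _ => (hR x).hasDerivWithinAt.mono (Set.Ici_subset_Ici.mpr le_rfl))
    (B := fun t => CC * t ^ (p+1) / (p+1).factorial)
    (B' := fun t => CC * t ^ p / p.factorial)
    (by simp [hR0])
    hBd
    (fun x hx => hb x ⟨hx.1, le_of_lt hx.2⟩)
  exact fun t ht => this ht

/-- Sharp Taylor remainder bound on `[0, h]` for a chain of derivatives `f k` with
Taylor coefficients `a k`. -/
lemma sharp_remainder {E : Type*} [NormedAddCommGroup E] [NormedSpace ℝ E] :
    ∀ (q : ℕ) (f : ℕ → ℝ → E) (a : ℕ → ℕ → E) (C h : ℝ),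
    (∀ k s, HasDerivAt (f k) (f (k+1) s) s) →
    (∀ k, f k 0 = a k 0) →
    (∀ k m, a (k+1) m = ((m:ℝ)+1) • a k (m+1)) →
    (∀ s ∈ Icc (0:ℝ) h, ‖f (q+1) s‖ ≤ C) →
    ∀ t ∈ Icc (0:ℝ) h,
      ‖f 0 t - ∑ m ∈ Finset.range (q+1), t ^ m • a 0 m‖ ≤ C * t ^ (q+1) / (q+1).factorial := by
  intro q
  induction q with
  | zero =>
    intro f a C h hderiv h0 hab hC
    have := norm_le_of_deriv_le (R := fun t => f 0 t - a 0 0) (R' := fun s => f 1 s)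
      (CC := C) (h := h) (p := 0)
      (fun s => (hderiv 0 s).sub_const _) (by simp [h0 0])
      (fun s hs => by simpa using hC s hs)
    intro t ht
    simpa using this t ht
  | succ q ih =>
    intro f a C h hderiv h0 hab hC
    have IH := ih (fun k => f (k+1)) (fun k => a (k+1)) C h
      (fun k s => hderiv (k+1) s) (fun k => h0 (k+1)) (fun k m => hab (k+1) m) hC
    have hsum : ∀ t : ℝ, HasDerivAt (fun t => ∑ m ∈ Finset.range (q+2), t ^ m • a 0 m)
        (∑ m ∈ Finset.range (q+1), t ^ m • a 1 m) t := by
      intro t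
      have h1 : HasDerivAt (fun t : ℝ => ∑ m ∈ Finset.range (q+2), t ^ m • a 0 m)
          (∑ m ∈ Finset.range (q+2), ((m : ℝ) * t ^ (m-1)) • a 0 m) t := by
        apply HasDerivAt.fun_sum
        intro m _
        exact (hasDerivAt_pow m t).smul_const (a 0 m)
      convert h1 using 1
      rw [Finset.sum_range_succ' (fun m => ((m : ℝ) * t ^ (m-1)) • a 0 m) (q+1)]
      simp only [Nat.cast_zero, zero_mul, zero_smul, add_zero]
      refine (Finset.sum_congr rfl fun m _ => ?_).symm
      rw [hab 0 m]
      rw [smul_smul]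
      push_cast
      congr 1
      ring
    have hR0 : f 0 0 - ∑ m ∈ Finset.range (q+2), (0:ℝ) ^ m • a 0 m = 0 := by
      rw [Finset.sum_range_succ' (fun m => (0:ℝ) ^ m • a 0 m) (q+1)]
      simp [h0 0]
    exact norm_le_of_deriv_le
      (R := fun t => f 0 t - ∑ m ∈ Finset.range (q+2), t ^ m • a 0 m)
      (R' := fun s => f 1 s - ∑ m ∈ Finset.range (q+1), s ^ m • a 1 m)
      (CC := C) (h := h) (p := q+1)
      (fun s => (hderiv 0 s).sub (hsum s)) hR0 IH

/-! ### Norm bound for a reversed product of unitaries times bounded factors -/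

lemma norm_ofFn_reverse_prod_le {E : Type*} [NormedRing E] [StarRing E] [CStarRing E]
    (hone : ‖(1 : E)‖ ≤ 1) :
    ∀ (r : ℕ) (U A : Fin r → E) (b : Fin r → ℝ),
      (∀ i, U i ∈ unitary E) → (∀ i, ‖A i‖ ≤ b i) → (∀ i, 0 ≤ b i) →
      ‖(List.ofFn fun i => U i * A i).reverse.prod‖ ≤ ∏ i, b i := by
  intro r
  induction r with
  | zero =>
    intro U A b _ _ _
    simpa using hone
  | succ r ih =>
    intro U A b hU hb hb0
    have hlist : (List.ofFn fun i : Fin (r+1) => U i * A i).reverse.prod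
        = U (Fin.last r) * (A (Fin.last r) *
            (List.ofFn fun i : Fin r => U i.castSucc * A i.castSucc).reverse.prod) := by
      rw [List.ofFn_succ']
      simp [List.reverse_concat, mul_assoc]
    rw [hlist]
    calc ‖U (Fin.last r) * (A (Fin.last r) *
            (List.ofFn fun i : Fin r => U i.castSucc * A i.castSucc).reverse.prod)‖
        = ‖A (Fin.last r) *
            (List.ofFn fun i : Fin r => U i.castSucc * A i.castSucc).reverse.prod‖ :=
          CStarRing.norm_coe_unitary_mul ⟨U (Fin.last r), hU (Fin.last r)⟩ _
      _ ≤ ‖A (Fin.last r)‖ *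
            ‖(List.ofFn fun i : Fin r => U i.castSucc * A i.castSucc).reverse.prod‖ :=
          norm_mul_le _ _
      _ ≤ b (Fin.last r) * ∏ i : Fin r, b i.castSucc :=
          mul_le_mul (hb _)
            (ih (fun i => U i.castSucc) (fun i => A i.castSucc) (fun i => b i.castSucc)
              (fun i => hU _) (fun i => hb _) (fun i => hb0 _))
            (norm_nonneg _) (hb0 _)
      _ = ∏ i : Fin (r+1), b i := by
          rw [Fin.prod_univ_castSucc]
          ring

/-! ### Matrix-specific constructions -/

section Matrices

variable {n r : ℕ} (C : Fin r → Matrix (Fin n) (Fin n) ℂ)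

lemma norm_one_le_matrix : ‖(1 : Matrix (Fin n) (Fin n) ℂ)‖ ≤ 1 := by
  rw [Matrix.cstar_norm_def, map_one]
  exact ContinuousLinearMap.norm_id_le

lemma exp_smul_mem_unitary {X : Matrix (Fin n) (Fin n) ℂ} (hX : Xᴴ = -X) (s : ℝ) :
    exp (s • X) ∈ unitary (Matrix (Fin n) (Fin n) ℂ) := by
  let +nondep : NormedAlgebra ℚ (Matrix (Fin n) (Fin n) ℂ) := .restrictScalars ℚ ℂ _
  apply exp_mem_unitary_of_mem_skewAdjoint
  rw [skewAdjoint.mem_iff, star_smul s X]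
  show s • Xᴴ = _
  rw [hX, smul_neg]

noncomputable def P (j : Fin r → ℕ) (t : ℝ) : Matrix (Fin n) (Fin n) ℂ :=
  (List.ofFn fun i => exp (t • C i) * C i ^ j i).reverse.prod

noncomputable def fprod (k : ℕ) (t : ℝ) : Matrix (Fin n) (Fin n) ℂ :=
  ∑ j ∈ Finset.Nat.antidiagonalTuple r k, ((k.factorial : ℝ) * W j) • P C j t

noncomputable def aprod (k m : ℕ) : Matrix (Fin n) (Fin n) ℂ :=
  (((m + k).factorial : ℝ) / (m.factorial : ℝ)) •
    ∑ j ∈ Finset.Nat.antidiagonalTuple r (m + k),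
      W j • (List.ofFn fun i => C i ^ j i).reverse.prod

lemma hasDerivAt_P (j : Fin r → ℕ) (s : ℝ) :
    HasDerivAt (P C j) (∑ i0 : Fin r, P C (Function.update j i0 (j i0 + 1)) s) s := by
  have hF : ∀ i : Fin r, HasDerivAt (fun t : ℝ => exp (t • C i) * C i ^ j i)
      (exp (s • C i) * C i ^ (j i + 1)) s := by
    intro i
    have := (hasDerivAt_exp_smul_const (C i) s).mul_const (C i ^ j i)
    refine this.congr_deriv ?_
    rw [mul_assoc, ← pow_succ']
  have h := hasDerivAt_ofFn_reverse_prod r (fun i t => exp (t • C i) * C i ^ j i)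
    (fun i t => exp (t • C i) * C i ^ (j i + 1)) s hF
  refine h.congr_deriv ?_
  refine Finset.sum_congr rfl fun i0 _ => ?_
  unfold P
  have harg : (fun i => exp (s • C i) * C i ^ (Function.update j i0 (j i0 + 1) i))
      = (fun i => if i = i0 then exp (s • C i) * C i ^ (j i + 1)
          else exp (s • C i) * C i ^ j i) := by
    funext i
    rcases eq_or_ne i i0 with rfl | hi
    · rw [if_pos rfl, Function.update_self]
    · rw [if_neg hi, Function.update_of_ne hi]
  rw [harg]

lemma hasDerivAt_fprod (k : ℕ) (s : ℝ) :
    HasDerivAt (fprod C k) (fprod C (k + 1) s) s := by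
  have h : HasDerivAt (fun t => ∑ j ∈ Finset.Nat.antidiagonalTuple r k,
        ((k.factorial : ℝ) * W j) • P C j t)
      (∑ j ∈ Finset.Nat.antidiagonalTuple r k,
        ((k.factorial : ℝ) * W j) • ∑ i0 : Fin r, P C (Function.update j i0 (j i0 + 1)) s) s :=
    HasDerivAt.fun_sum fun j _ => (hasDerivAt_P C j s).const_smul ((k.factorial : ℝ) * W j)
  have heq : ∑ j ∈ Finset.Nat.antidiagonalTuple r k,
        ((k.factorial : ℝ) * W j) • ∑ i0 : Fin r, P C (Function.update j i0 (j i0 + 1)) s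
      = fprod C (k + 1) s := by
    calc ∑ j ∈ Finset.Nat.antidiagonalTuple r k,
          ((k.factorial : ℝ) * W j) • ∑ i0 : Fin r, P C (Function.update j i0 (j i0 + 1)) s
        = (k.factorial : ℝ) • ∑ j ∈ Finset.Nat.antidiagonalTuple r k, ∑ i0 : Fin r,
            W j • P C (Function.update j i0 (j i0 + 1)) s := by
          rw [Finset.smul_sum]
          refine Finset.sum_congr rfl fun j _ => ?_
          rw [mul_smul, Finset.smul_sum]
      _ = (k.factorial : ℝ) • ∑ j ∈ Finset.Nat.antidiagonalTuple r (k+1),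
            (((k : ℝ) + 1) * W j) • P C j s := by
          rw [key_reindex (fun j => P C j s)]
      _ = fprod C (k + 1) s := by
          unfold fprod
          rw [Finset.smul_sum]
          refine Finset.sum_congr rfl fun j _ => ?_
          rw [smul_smul]
          congr 1
          rw [Nat.factorial_succ]
          push_cast; ring
  exact heq ▸ h

lemma P_zero (j : Fin r → ℕ) :
    P C j 0 = (List.ofFn fun i => C i ^ j i).reverse.prod := by
  unfold P
  simp only [zero_smul, exp_zero, one_mul]

lemma fprod_zero (k : ℕ) : fprod C k 0 = aprod C k 0 := by
  unfold fprod aprod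
  simp only [Nat.zero_add, Nat.factorial_zero, Nat.cast_one, div_one]
  rw [Finset.smul_sum]
  refine Finset.sum_congr rfl fun j _ => ?_
  rw [P_zero, smul_smul]

lemma aprod_succ (k m : ℕ) : aprod C (k + 1) m = ((m : ℝ) + 1) • aprod C k (m + 1) := by
  unfold aprod
  rw [show m + 1 + k = m + (k + 1) from by omega]
  rw [smul_smul]
  congr 1
  have h1 : ((m + 1).factorial : ℝ) = ((m : ℝ) + 1) * (m.factorial : ℝ) := by
    rw [Nat.factorial_succ]; push_cast; ring
  rw [h1]
  have h2 : (m.factorial : ℝ) ≠ 0 := Nat.cast_ne_zero.mpr m.factorial_ne_zero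
  have h3 : ((m : ℝ) + 1) ≠ 0 := by positivity
  field_simp

lemma norm_fprod_le (hskew : ∀ i, (C i)ᴴ = -(C i)) (k : ℕ) (s : ℝ) :
    ‖fprod C k s‖ ≤ (∑ i, ‖C i‖) ^ k := by
  have hP : ∀ j : Fin r → ℕ, ‖P C j s‖ ≤ ∏ i, ‖C i‖ ^ j i := by
    intro j
    unfold P
    refine norm_ofFn_reverse_prod_le norm_one_le_matrix r
      (fun i => exp (s • C i)) (fun i => C i ^ j i) (fun i => ‖C i‖ ^ j i)
      (fun i => exp_smul_mem_unitary (hskew i) s) (fun i => ?_) (fun i => by positivity)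
    show ‖C i ^ j i‖ ≤ ‖C i‖ ^ j i
    rcases Nat.eq_zero_or_pos (j i) with h0 | h0
    · rw [h0, pow_zero, pow_zero]
      exact norm_one_le_matrix
    · exact norm_pow_le' _ h0
  calc ‖fprod C k s‖
      ≤ ∑ j ∈ Finset.Nat.antidiagonalTuple r k, ‖((k.factorial : ℝ) * W j) • P C j s‖ :=
        norm_sum_le _ _
    _ ≤ ∑ j ∈ Finset.Nat.antidiagonalTuple r k,
          ((k.factorial : ℝ) * W j) * ∏ i, ‖C i‖ ^ j i := by
        refine Finset.sum_le_sum fun j _ => ?_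
        rw [norm_smul, Real.norm_eq_abs,
          abs_of_nonneg (mul_nonneg (by positivity) (W_nonneg j))]
        exact mul_le_mul_of_nonneg_left (hP j)
          (mul_nonneg (by positivity) (W_nonneg j))
    _ = (∑ i, ‖C i‖) ^ k := sum_W_prod_pow _ k

end Matrices

end ExpProdAux

/-- Local-error bound for a product of exponentials of skew-adjoint
matrices in terms of truncated Taylor expansions. -/
theorem product_of_exponentials_local_error_bound {n r : ℕ}
    (C : Fin r → Matrix (Fin n) (Fin n) ℂ)
    (hskew : ∀ j, (C j)ᴴ = -(C j)) (q : ℕ) (hq : 1 ≤ q) (h : ℝ) (hh : 0 ≤ h) :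
    ‖(List.ofFn fun j => exp (h • C j)).reverse.prod - exp (h • ∑ j, C j)‖ ≤
      (∑ m ∈ Finset.Icc 1 q, h ^ m *
          ‖(∑ j ∈ Finset.Nat.antidiagonalTuple r m,
              ((∏ i, (j i).factorial : ℕ) : ℝ)⁻¹ •
                (List.ofFn fun i => C i ^ j i).reverse.prod)
            - ((m.factorial : ℝ))⁻¹ • (∑ j, C j) ^ m‖)
        + h ^ (q + 1) / (q + 1).factorial *
            ((∑ j, ‖C j‖) ^ (q + 1) + ‖∑ j, C j‖ ^ (q + 1)) := by
  classical
  have hMskew : (∑ j, C j)ᴴ = -(∑ j, C j) := by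
    rw [Matrix.conjTranspose_sum]
    simp [hskew, Finset.sum_neg_distrib]
  have hmemh : h ∈ Set.Icc (0:ℝ) h := Set.mem_Icc.mpr ⟨hh, le_refl h⟩
  -- remainder bound for the product of exponentials
  have key1 := ExpProdAux.sharp_remainder q (ExpProdAux.fprod C) (ExpProdAux.aprod C)
    ((∑ i, ‖C i‖) ^ (q+1)) h
    (fun k s => ExpProdAux.hasDerivAt_fprod C k s)
    (fun k => ExpProdAux.fprod_zero C k)
    (fun k m => ExpProdAux.aprod_succ C k m)
    (fun s _ => ExpProdAux.norm_fprod_le C hskew (q+1) s)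
    h hmemh
  -- remainder bound for the exponential of the sum
  have hgderiv : ∀ (k : ℕ) (s : ℝ),
      HasDerivAt (fun t : ℝ => exp (t • ∑ j, C j) * (∑ j, C j) ^ k)
        (exp (s • ∑ j, C j) * (∑ j, C j) ^ (k+1)) s := by
    intro k s
    have := (hasDerivAt_exp_smul_const (∑ j, C j) s).mul_const ((∑ j, C j) ^ k)
    refine this.congr_deriv ?_
    rw [mul_assoc, ← pow_succ']
  have key2 := ExpProdAux.sharp_remainder q
    (fun k t => exp (t • ∑ j, C j) * (∑ j, C j) ^ k)
    (fun k m => ((m.factorial : ℝ))⁻¹ • (∑ j, C j) ^ (m+k))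
    (‖∑ j, C j‖ ^ (q+1)) h
    (fun k s => hgderiv k s)
    (fun k => by simp)
    (fun k m => by
      rw [show m + 1 + k = m + (k + 1) from by omega, smul_smul]
      congr 1
      have h1 : ((m + 1).factorial : ℝ) = ((m : ℝ) + 1) * (m.factorial : ℝ) := by
        rw [Nat.factorial_succ]; push_cast; ring
      rw [h1, mul_inv, ← mul_assoc,
        mul_inv_cancel₀ (by positivity : ((m:ℝ)+1) ≠ 0), one_mul])
    (fun s _ => by
      calc ‖exp (s • ∑ j, C j) * (∑ j, C j) ^ (q+1)‖
          = ‖(∑ j, C j) ^ (q+1)‖ := CStarRing.norm_coe_unitary_mul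
            ⟨exp (s • ∑ j, C j), ExpProdAux.exp_smul_mem_unitary hMskew s⟩ _
        _ ≤ ‖∑ j, C j‖ ^ (q+1) := norm_pow_le' _ (Nat.succ_pos q))
    h hmemh
  -- identify the two functions at `h` with the matrices in the statement
  have hf0 : ExpProdAux.fprod C 0 h = (List.ofFn fun j => exp (h • C j)).reverse.prod := by
    unfold ExpProdAux.fprod ExpProdAux.P ExpProdAux.W
    rw [Finset.Nat.antidiagonalTuple_zero_right, Finset.sum_singleton]
    simp only [Pi.zero_apply, Nat.factorial_zero, Finset.prod_const_one, Nat.cast_one,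
      inv_one, mul_one, one_smul, pow_zero, mul_one]
  have hg0eq : exp (h • ∑ j, C j) * (∑ j, C j) ^ 0 = exp (h • ∑ j, C j) := by
    rw [pow_zero, mul_one]
  have ha0m : ∀ m : ℕ, ExpProdAux.aprod C 0 m
      = ∑ j ∈ Finset.Nat.antidiagonalTuple r m,
          ((∏ i, (j i).factorial : ℕ) : ℝ)⁻¹ • (List.ofFn fun i => C i ^ j i).reverse.prod := by
    intro m
    unfold ExpProdAux.aprod ExpProdAux.W
    rw [Nat.add_zero, div_self (Nat.cast_ne_zero.mpr m.factorial_ne_zero), one_smul]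
  have ha00 : ExpProdAux.aprod C 0 0 = 1 := by
    rw [ha0m 0, Finset.Nat.antidiagonalTuple_zero_right, Finset.sum_singleton]
    simp
  -- split into three pieces
  set T1 := ∑ m ∈ Finset.range (q+1), h ^ m • ExpProdAux.aprod C 0 m with hT1
  set T2 := ∑ m ∈ Finset.range (q+1),
      h ^ m • (((m.factorial : ℝ))⁻¹ • (∑ j, C j) ^ (m+0)) with hT2
  have hsplit : (List.ofFn fun j => exp (h • C j)).reverse.prod - exp (h • ∑ j, C j)
      = (ExpProdAux.fprod C 0 h - T1) + (T1 - T2)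
        + (T2 - exp (h • ∑ j, C j) * (∑ j, C j) ^ 0) := by
    rw [← hf0, hg0eq]
    abel
  have hmid : ‖T1 - T2‖ ≤ ∑ m ∈ Finset.Icc 1 q, h ^ m *
      ‖(∑ j ∈ Finset.Nat.antidiagonalTuple r m,
          ((∏ i, (j i).factorial : ℕ) : ℝ)⁻¹ •
            (List.ofFn fun i => C i ^ j i).reverse.prod)
        - ((m.factorial : ℝ))⁻¹ • (∑ j, C j) ^ m‖ := by
    rw [hT1, hT2, ← Finset.sum_sub_distrib]
    have hterm : ∀ m : ℕ, h ^ m • ExpProdAux.aprod C 0 m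
          - h ^ m • (((m.factorial : ℝ))⁻¹ • (∑ j, C j) ^ (m+0))
        = h ^ m • (ExpProdAux.aprod C 0 m - ((m.factorial : ℝ))⁻¹ • (∑ j, C j) ^ m) := by
      intro m
      rw [Nat.add_zero, ← smul_sub]
    rw [Finset.sum_congr rfl fun m _ => hterm m]
    rw [show Finset.range (q+1) = insert 0 (Finset.Icc 1 q) from by
      ext x; simp only [Finset.mem_range, Finset.mem_insert, Finset.mem_Icc]; omega]
    rw [Finset.sum_insert (by simp)]
    have h00 : h ^ (0:ℕ) • (ExpProdAux.aprod C 0 0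
        - ((Nat.factorial 0 : ℝ))⁻¹ • (∑ j, C j) ^ (0:ℕ)) = 0 := by
      rw [ha00]; simp
    rw [h00, zero_add]
    refine (norm_sum_le _ _).trans (Finset.sum_le_sum fun m hm => ?_)
    rw [norm_smul, Real.norm_eq_abs, abs_of_nonneg (pow_nonneg hh m), ha0m m]
  -- put everything together
  rw [hsplit]
  calc ‖(ExpProdAux.fprod C 0 h - T1) + (T1 - T2)
        + (T2 - exp (h • ∑ j, C j) * (∑ j, C j) ^ 0)‖
      ≤ ‖ExpProdAux.fprod C 0 h - T1‖ + ‖T1 - T2‖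
        + ‖T2 - exp (h • ∑ j, C j) * (∑ j, C j) ^ 0‖ := norm_add₃_le
    _ ≤ (∑ m ∈ Finset.Icc 1 q, h ^ m *
          ‖(∑ j ∈ Finset.Nat.antidiagonalTuple r m,
              ((∏ i, (j i).factorial : ℕ) : ℝ)⁻¹ •
                (List.ofFn fun i => C i ^ j i).reverse.prod)
            - ((m.factorial : ℝ))⁻¹ • (∑ j, C j) ^ m‖)
        + h ^ (q + 1) / (q + 1).factorial *
            ((∑ j, ‖C j‖) ^ (q + 1) + ‖∑ j, C j‖ ^ (q + 1)) := by
        have hb3 : ‖T2 - exp (h • ∑ j, C j) * (∑ j, C j) ^ 0‖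
            ≤ ‖∑ j, C j‖ ^ (q+1) * h ^ (q+1) / ((q+1).factorial : ℝ) := by
          rw [norm_sub_rev]
          exact key2
        have heqr : (∑ i, ‖C i‖) ^ (q+1) * h ^ (q+1) / ((q+1).factorial : ℝ)
            + ‖∑ j, C j‖ ^ (q+1) * h ^ (q+1) / ((q+1).factorial : ℝ)
            = h ^ (q + 1) / ((q + 1).factorial : ℝ) *
                ((∑ j, ‖C j‖) ^ (q + 1) + ‖∑ j, C j‖ ^ (q + 1)) := by
          ring
        linarith [key1, hmid, hb3]
end

section
/- Let A_1, ..., A_N be skew-adjoint matrices with ‖A_j‖ = a_j, and suppose the splitting method Ψ(h) = ∏_{j=1}^{s} e^{h α_N^{(j)} A_N}···e^{h α_1^{(j)} A_1} with real coefficients α_i^{(j)} approximates e^{h(A_1+···+A_N)} to order p, i.e., ‖Ψ(h) − e^{h(A_1+···+A_N)}‖ = O(h^{p+1}) with vanishing Taylor coefficients up to order p. Then for all h ≥ 0, ‖Ψ(h) − e^{hΣA_j}‖ ≤ h^{p+1}/(p+1)! · ((Σ_i a_i)^{p+1} + (Σ_i a_i (|α_i^{(1)}|+···+|α_i^{(s)}|))^{p+1}).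 -/
open scoped Matrix Matrix.Norms.L2Operator
open NormedSpace

section Aux

variable {d : ℕ}

private lemma mat_norm_one_le : ‖(1 : Matrix (Fin d) (Fin d) ℂ)‖ ≤ 1 := by
  have h := CStarRing.norm_star_mul_self (x := (1 : Matrix (Fin d) (Fin d) ℂ))
  simp only [star_one, one_mul] at h
  nlinarith [norm_nonneg (1 : Matrix (Fin d) (Fin d) ℂ)]

private lemma mat_unitary_norm_le {U : Matrix (Fin d) (Fin d) ℂ}
    (hU : star U * U = 1) : ‖U‖ ≤ 1 := by
  have h := CStarRing.norm_star_mul_self (x := U)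
  rw [hU] at h
  nlinarith [norm_nonneg U, mat_norm_one_le (d := d)]

private lemma exp_skew_unitary {M : Matrix (Fin d) (Fin d) ℂ} (hM : Mᴴ = -M) :
    star (exp M) * exp M = 1 := by
  have h : star (exp M) = exp (-M) := by
    rw [Matrix.star_eq_conjTranspose, ← Matrix.exp_conjTranspose, hM]
  rw [h, ← Matrix.exp_add_of_commute _ _ (Commute.neg_left (Commute.refl M)), neg_add_cancel, exp_zero]

private lemma skew_smul {M : Matrix (Fin d) (Fin d) ℂ} (hM : Mᴴ = -M) (t : ℝ) :
    (t • M)ᴴ = -(t • M) := by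
  rw [Matrix.conjTranspose_smul, star_trivial, hM, smul_neg]

private lemma norm_exp_skew_le {M : Matrix (Fin d) (Fin d) ℂ} (hM : Mᴴ = -M) (t : ℝ) :
    ‖exp (t • M)‖ ≤ 1 :=
  mat_unitary_norm_le (exp_skew_unitary (skew_smul hM t))

private lemma iteratedDeriv_exp_smul (M : Matrix (Fin d) (Fin d) ℂ) (k : ℕ) :
    iteratedDeriv k (fun t : ℝ => exp (t • M)) = fun t => M ^ k * exp (t • M) := by
  induction k with
  | zero => simp
  | succ k ih =>
    rw [iteratedDeriv_succ, ih]
    funext t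
    have h1 : HasDerivAt (fun t : ℝ => exp (t • M)) (exp (t • M) * M) t :=
      hasDerivAt_exp_smul_const M t
    have h2 : HasDerivAt (fun t : ℝ => M ^ k * exp (t • M))
        (M ^ k * (exp (t • M) * M)) t := h1.const_mul _
    rw [h2.deriv]
    have hc : Commute M (exp (t • M)) := ((Commute.refl M).smul_right t).exp_right
    rw [← hc.eq, ← mul_assoc, ← pow_succ]

private lemma contDiff_exp_smul (M : Matrix (Fin d) (Fin d) ℂ) (m : ℕ) :
    ContDiff ℝ m (fun t : ℝ => exp (t • M)) := by
  have h1 : ContDiff ℝ m (exp : Matrix (Fin d) (Fin d) ℂ → _) :=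
    contDiff_iff_contDiffAt.mpr fun x => (exp_analytic x).contDiffAt
  exact h1.comp (contDiff_id.smul contDiff_const)

/-- A function all of whose iterated derivatives are bounded by `c ^ m`. -/
private def Good (c : ℝ) (f : ℝ → Matrix (Fin d) (Fin d) ℂ) : Prop :=
  0 ≤ c ∧ (∀ m : ℕ, ContDiff ℝ m f) ∧ ∀ (m : ℕ) (x : ℝ), ‖iteratedDeriv m f x‖ ≤ c ^ m

private lemma good_exp_skew {M : Matrix (Fin d) (Fin d) ℂ} (hM : Mᴴ = -M) :
    Good ‖M‖ (fun t : ℝ => exp (t • M)) := by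
  refine ⟨norm_nonneg M, contDiff_exp_smul M, fun m x => ?_⟩
  rw [iteratedDeriv_exp_smul]
  cases m with
  | zero => simpa using norm_exp_skew_le hM x
  | succ m =>
    calc ‖M ^ (m + 1) * exp (x • M)‖ ≤ ‖M ^ (m + 1)‖ * ‖exp (x • M)‖ := norm_mul_le _ _
    _ ≤ ‖M‖ ^ (m + 1) * 1 :=
        mul_le_mul (norm_pow_le' M m.succ_pos) (norm_exp_skew_le hM x) (norm_nonneg _)
          (pow_nonneg (norm_nonneg _) _)
    _ = ‖M‖ ^ (m + 1) := mul_one _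

private lemma good_congr {c : ℝ} {f g : ℝ → Matrix (Fin d) (Fin d) ℂ} (h : f = g)
    (hf : Good c f) : Good c g := h ▸ hf

private lemma good_mul {c1 c2 : ℝ} {f g : ℝ → Matrix (Fin d) (Fin d) ℂ}
    (h1 : Good c1 f) (h2 : Good c2 g) : Good (c1 + c2) (fun x => f x * g x) := by
  obtain ⟨hc1, hf, hfb⟩ := h1
  obtain ⟨hc2, hg, hgb⟩ := h2
  refine ⟨by positivity, fun m => (hf m).mul (hg m), fun m x => ?_⟩
  have hmain := norm_iteratedFDeriv_mul_le (𝕜 := ℝ) (hf m) (hg m) x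
    (le_refl ((m : ℕ) : WithTop ℕ∞))
  rw [← norm_iteratedFDeriv_eq_norm_iteratedDeriv]
  refine hmain.trans ?_
  have hstep : ∀ i ∈ Finset.range (m + 1),
      (m.choose i : ℝ) * ‖iteratedFDeriv ℝ i f x‖ * ‖iteratedFDeriv ℝ (m - i) g x‖ ≤
        (m.choose i : ℝ) * c1 ^ i * c2 ^ (m - i) := by
    intro i _
    have e1 : ‖iteratedFDeriv ℝ i f x‖ ≤ c1 ^ i := by
      rw [norm_iteratedFDeriv_eq_norm_iteratedDeriv]; exact hfb i x
    have e2 : ‖iteratedFDeriv ℝ (m - i) g x‖ ≤ c2 ^ (m - i) := by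
      rw [norm_iteratedFDeriv_eq_norm_iteratedDeriv]; exact hgb (m - i) x
    exact mul_le_mul (mul_le_mul_of_nonneg_left e1 (by positivity)) e2 (norm_nonneg _)
      (by positivity)
  refine (Finset.sum_le_sum hstep).trans (le_of_eq ?_)
  rw [add_pow]
  exact Finset.sum_congr rfl fun i _ => by ring

private lemma iteratedDeriv_const_succ (m : ℕ) :
    ∀ c : Matrix (Fin d) (Fin d) ℂ, iteratedDeriv (m + 1) (fun _ : ℝ => c) = fun _ => 0 := by
  induction m with
  | zero => intro c; rw [iteratedDeriv_succ', deriv_const', iteratedDeriv_zero]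
  | succ m ih => intro c; rw [iteratedDeriv_succ', deriv_const']; exact ih 0

private lemma good_one : Good (d := d) 0 (fun _ => 1) := by
  refine ⟨le_refl 0, fun m => contDiff_const, fun m x => ?_⟩
  cases m with
  | zero => simpa using mat_norm_one_le (d := d)
  | succ m => rw [iteratedDeriv_const_succ m 1]; simp

private lemma good_list :
    ∀ L : List ((ℝ → Matrix (Fin d) (Fin d) ℂ) × ℝ), (∀ q ∈ L, Good q.2 q.1) →
      Good ((L.map Prod.snd).sum) (fun x => (L.map fun q => q.1 x).prod) := by
  intro L
  induction L with
  | nil => intro _; simpa using good_one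
  | cons q L ih =>
    intro h
    have h1 : Good q.2 q.1 := h q (List.mem_cons_self)
    have h2 := ih fun r hr => h r (List.mem_cons_of_mem q hr)
    have h3 := good_mul h1 h2
    simpa using h3

private lemma iteratedDeriv_sub' {f g : ℝ → Matrix (Fin d) (Fin d) ℂ} {i : ℕ}
    (hf : ContDiff ℝ i f) (hg : ContDiff ℝ i g) (x : ℝ) :
    iteratedDeriv i (fun t => f t - g t) x = iteratedDeriv i f x - iteratedDeriv i g x := by
  have h1 : (fun t => f t - g t) = f - g := rfl
  rw [h1, ← iteratedDerivWithin_univ, ← iteratedDerivWithin_univ, ← iteratedDerivWithin_univ]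
  exact iteratedDerivWithin_sub (Set.mem_univ x) uniqueDiffOn_univ hf.contDiffWithinAt hg.contDiffWithinAt

end Aux

/-- Local error bound for a general splitting method of order p,
in terms of the norms of the operators. -/
theorem general_splitting_local_error_bound {n N s p : ℕ}
    (A : Fin N → Matrix (Fin n) (Fin n) ℂ)
    (a : Fin N → ℝ) (ha : ∀ i, ‖A i‖ = a i)
    (hskew : ∀ i, (A i)ᴴ = -(A i))
    (α : Fin N → Fin s → ℝ)
    (Ψ : ℝ → Matrix (Fin n) (Fin n) ℂ)
    (hΨ : ∀ h : ℝ, Ψ h =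
      (List.ofFn fun j : Fin s =>
        (List.ofFn fun i : Fin N => exp ((h * α i j) • A i)).reverse.prod).reverse.prod)
    (horder : ∀ k ≤ p,
      iteratedDeriv k (fun h : ℝ => Ψ h - exp (h • ∑ i, A i)) 0 = 0) :
    ∀ h : ℝ, 0 ≤ h →
      ‖Ψ h - exp (h • ∑ i, A i)‖ ≤
        h ^ (p + 1) / (p + 1).factorial *
          ((∑ i, a i) ^ (p + 1) + (∑ i, a i * ∑ j, |α i j|) ^ (p + 1)) := by
  have hEe : (exp : Matrix (Fin n) (Fin n) ℂ → _) = exp := rfl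
  set g : ℝ → Matrix (Fin n) (Fin n) ℂ := fun h : ℝ => Ψ h - exp (h • ∑ i, A i) with hgdef
  -- explicit versions over ℝ
  set F : ℝ → Matrix (Fin n) (Fin n) ℂ := fun t =>
    (List.ofFn fun j : Fin s =>
      (List.ofFn fun i : Fin N => exp ((t * α i j) • A i)).reverse.prod).reverse.prod with hFdef
  set E : ℝ → Matrix (Fin n) (Fin n) ℂ := fun t => exp (t • ∑ i, A i) with hEdef
  have hgFE : g = fun t => F t - E t := by
    funext t
    rw [hgdef, hFdef, hEdef]
    simp only [hΨ t, hEe]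
  -- goodness of E
  have hBskew : (∑ i, A i)ᴴ = -(∑ i, A i) := by
    rw [Matrix.conjTranspose_sum]
    simp [hskew]
  have hGoodE : Good ‖∑ i, A i‖ E := good_exp_skew hBskew
  have hBle : ‖∑ i, A i‖ ≤ ∑ i, a i := by
    refine (norm_sum_le _ _).trans (le_of_eq (Finset.sum_congr rfl fun i _ => ha i))
  -- goodness of inner products
  have hinner : ∀ j : Fin s, Good (∑ i, |α i j| * a i)
      (fun t => (List.ofFn fun i : Fin N => exp ((t * α i j) • A i)).reverse.prod) := by
    intro j
    have hmem : ∀ q ∈ (List.ofFn fun i : Fin N =>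
        ((fun t : ℝ => exp ((t * α i j) • A i)), |α i j| * a i)).reverse, Good q.2 q.1 := by
      intro q hq
      obtain ⟨i, hi⟩ := List.mem_ofFn.mp (List.mem_reverse.mp hq)
      subst hi
      have hM : ((α i j) • A i)ᴴ = -((α i j) • A i) := by
        rw [Matrix.conjTranspose_smul, star_trivial, hskew i, smul_neg]
      have hG := good_exp_skew hM
      have hnorm : ‖(α i j) • A i‖ = |α i j| * a i := by
        rw [norm_smul, Real.norm_eq_abs, ha i]
      rw [hnorm] at hG
      refine good_congr ?_ hG
      funext t
      rw [smul_smul]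
    have h1 := good_list _ hmem
    simpa [List.map_reverse, List.map_ofFn, Function.comp_def, List.sum_reverse, List.sum_ofFn]
      using h1
  -- goodness of F
  have hGoodF : Good (∑ j : Fin s, ∑ i, |α i j| * a i) F := by
    have hmem : ∀ q ∈ (List.ofFn fun j : Fin s =>
        ((fun t : ℝ => (List.ofFn fun i : Fin N => exp ((t * α i j) • A i)).reverse.prod),
          ∑ i, |α i j| * a i)).reverse, Good q.2 q.1 := by
      intro q hq
      obtain ⟨j, hj⟩ := List.mem_ofFn.mp (List.mem_reverse.mp hq)
      subst hj
      exact hinner j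
    have h1 := good_list _ hmem
    rw [hFdef]
    simpa [List.map_reverse, List.map_ofFn, Function.comp_def, List.sum_reverse, List.sum_ofFn]
      using h1
  have hS2eq : (∑ j : Fin s, ∑ i, |α i j| * a i) = ∑ i, a i * ∑ j, |α i j| := by
    rw [Finset.sum_comm]
    refine Finset.sum_congr rfl fun i _ => ?_
    rw [Finset.mul_sum]
    exact Finset.sum_congr rfl fun j _ => mul_comm _ _
  -- abbreviations
  set S1 : ℝ := ∑ i, a i with hS1
  set S2 : ℝ := ∑ i, a i * ∑ j, |α i j| with hS2
  set C : ℝ := S1 ^ (p + 1) + S2 ^ (p + 1) with hCdef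
  have hS1nn : 0 ≤ S1 := le_trans (norm_nonneg _) hBle
  have hS2nn : 0 ≤ S2 := hS2eq ▸ hGoodF.1
  -- smoothness of g
  have hsmooth : ∀ m : ℕ, ContDiff ℝ m g := by
    intro m
    rw [hgFE]
    exact (hGoodF.2.1 m).sub (hGoodE.2.1 m)
  -- derivative bound
  have hC : ∀ t : ℝ, ‖iteratedDeriv (p + 1) g t‖ ≤ C := by
    intro t
    have hsub : iteratedDeriv (p + 1) g t =
        iteratedDeriv (p + 1) F t - iteratedDeriv (p + 1) E t := by
      rw [hgFE]
      exact iteratedDeriv_sub' (hGoodF.2.1 (p + 1)) (hGoodE.2.1 (p + 1)) t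
    rw [hsub]
    have h1 : ‖iteratedDeriv (p + 1) F t‖ ≤ S2 ^ (p + 1) := by
      have := hGoodF.2.2 (p + 1) t
      rwa [hS2eq] at this
    have h2 : ‖iteratedDeriv (p + 1) E t‖ ≤ S1 ^ (p + 1) := by
      refine (hGoodE.2.2 (p + 1) t).trans ?_
      exact pow_le_pow_left₀ (norm_nonneg _) hBle _
    calc ‖iteratedDeriv (p + 1) F t - iteratedDeriv (p + 1) E t‖
        ≤ ‖iteratedDeriv (p + 1) F t‖ + ‖iteratedDeriv (p + 1) E t‖ := norm_sub_le _ _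
      _ ≤ S2 ^ (p + 1) + S1 ^ (p + 1) := add_le_add h1 h2
      _ = C := by rw [hCdef]; ring
  -- main induction
  have key : ∀ k : ℕ, k ≤ p + 1 → ∀ t : ℝ, 0 ≤ t →
      ‖iteratedDeriv (p + 1 - k) g t‖ ≤ C * t ^ k / (k.factorial : ℝ) := by
    intro k
    induction k with
    | zero => intro _ t _; simpa using hC t
    | succ k ih =>
      intro hk t ht
      have hkp : k ≤ p := by omega
      have ihk := ih (by omega)
      have hidx : p + 1 - (k + 1) = p - k := by omega
      have hidx2 : p - k + 1 = p + 1 - k := by omega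
      rw [hidx]
      have h0 : iteratedDeriv (p - k) g 0 = 0 := horder (p - k) (by omega)
      have hdiff : Differentiable ℝ (iteratedDeriv (p - k) g) := by
        refine (hsmooth (p - k + 1)).differentiable_iteratedDeriv (p - k) ?_
        exact_mod_cast lt_add_one (p - k)
      have hderiv : ∀ x : ℝ, HasDerivAt (iteratedDeriv (p - k) g)
          (iteratedDeriv (p - k + 1) g x) x := by
        intro x
        have h1 : iteratedDeriv (p - k + 1) g x = deriv (iteratedDeriv (p - k) g) x := by
          rw [iteratedDeriv_succ]
        rw [h1]
        exact (hdiff x).hasDerivAt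
      have hB : ∀ x : ℝ, HasDerivAt (fun x : ℝ => C * x ^ (k + 1) / ((k + 1).factorial : ℝ))
          (C * x ^ k / (k.factorial : ℝ)) x := by
        intro x
        have h1 := (hasDerivAt_pow (k + 1) x).const_mul (C / ((k + 1).factorial : ℝ))
        have hfac : ((k + 1).factorial : ℝ) = (k + 1) * (k.factorial : ℝ) := by
          exact_mod_cast Nat.factorial_succ k
        have hk0 : (k.factorial : ℝ) ≠ 0 := by positivity
        convert! h1 using 1
        · funext y; ring
        · rw [hfac, Nat.add_sub_cancel, Nat.cast_succ]; field_simp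
      have happly := image_norm_le_of_norm_deriv_right_le_deriv_boundary
        (f := iteratedDeriv (p - k) g) (f' := iteratedDeriv (p - k + 1) g)
        (a := 0) (b := t)
        (hdiff.continuous.continuousOn)
        (fun x _ => (hderiv x).hasDerivWithinAt)
        (B := fun x : ℝ => C * x ^ (k + 1) / ((k + 1).factorial : ℝ))
        (B' := fun x : ℝ => C * x ^ k / (k.factorial : ℝ))
        (by rw [h0]; simp)
        hB
        (fun x hx => by
          have := ihk x hx.1
          rwa [hidx2])
      exact happly (Set.right_mem_Icc.mpr ht)
  intro h hh
  have hfin := key (p + 1) le_rfl h hh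
  rw [Nat.sub_self, iteratedDeriv_zero] at hfin
  calc ‖Ψ h - exp (h • ∑ i, A i)‖ = ‖g h‖ := rfl
    _ ≤ C * h ^ (p + 1) / ((p + 1).factorial : ℝ) := hfin
    _ = h ^ (p + 1) / (p + 1).factorial * (S1 ^ (p + 1) + S2 ^ (p + 1)) := by
        rw [hCdef]; ring
end

section
/- For skew-adjoint matrices C_1, ..., C_r, define M(t) = (d/dt)(e^{tC_r}···e^{tC_1}) · (e^{tC_r}···e^{tC_1})^{-1}. Then for all h ≥ 0, ‖e^{hC_r}···e^{hC_1} − e^{h(C_1+···+C_r)}‖ ≤ ∫_0^h ‖M(t) − (C_1+···+C_r)‖ dt. -/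
open scoped Matrix Matrix.Norms.L2Operator
open NormedSpace

namespace LocalErrorAux

noncomputable instance ratNormedAlgebraMatrix {n : ℕ} : NormedAlgebra ℚ (Matrix (Fin n) (Fin n) ℂ) :=
  NormedAlgebra.restrictScalars ℚ ℂ _

variable {n : ℕ}

/-- The product `exp (t•A_{r-1}) * ⋯ * exp (t•A_0)` for a list of matrices. -/
noncomputable def Psi (l : List (Matrix (Fin n) (Fin n) ℂ)) (t : ℝ) :
    Matrix (Fin n) (Fin n) ℂ :=
  (l.map fun A => exp (t • A)).reverse.prod

lemma Psi_nil (t : ℝ) : Psi ([] : List (Matrix (Fin n) (Fin n) ℂ)) t = 1 := rfl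

lemma Psi_cons (A : Matrix (Fin n) (Fin n) ℂ) (l : List (Matrix (Fin n) (Fin n) ℂ)) (t : ℝ) :
    Psi (A :: l) t = Psi l t * exp (t • A) := by
  simp [Psi]

lemma Psi_zero (l : List (Matrix (Fin n) (Fin n) ℂ)) : Psi l 0 = 1 := by
  induction l with
  | nil => rfl
  | cons A l ih => rw [Psi_cons, zero_smul, exp_zero, mul_one, ih]

lemma Psi_deriv (l : List (Matrix (Fin n) (Fin n) ℂ)) :
    ∃ D : ℝ → Matrix (Fin n) (Fin n) ℂ,
      Continuous D ∧ ∀ t, HasDerivAt (Psi l) (D t) t := by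
  induction l with
  | nil =>
    exact ⟨0, continuous_const, fun t => by
      exact hasDerivAt_const t (1 : Matrix (Fin n) (Fin n) ℂ)⟩
  | cons A l ih =>
    obtain ⟨D, hDc, hD⟩ := ih
    have hexp : Continuous fun t : ℝ => exp (t • A) :=
      exp_continuous.comp (continuous_id.smul continuous_const)
    have hPsic : Continuous (Psi l) :=
      continuous_iff_continuousAt.mpr fun t => (hD t).continuousAt
    refine ⟨fun t => D t * exp (t • A) + Psi l t * (exp (t • A) * A),
      (hDc.mul hexp).add (hPsic.mul (hexp.mul continuous_const)), fun t => ?_⟩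
    have h1 := (hD t).mul (hasDerivAt_exp_smul_const A t)
    have heq : Psi (A :: l) = fun u => Psi l u * exp (u • A) := funext fun u => Psi_cons A l u
    rw [heq]
    exact h1

lemma Psi_unitary (l : List (Matrix (Fin n) (Fin n) ℂ)) (hl : ∀ A ∈ l, Aᴴ = -A) (t : ℝ) :
    Psi l t ∈ unitary (Matrix (Fin n) (Fin n) ℂ) := by
  induction l with
  | nil => rw [Psi_nil]; exact one_mem _
  | cons A l ih =>
    rw [Psi_cons]
    refine mul_mem (ih fun B hB => hl B (List.mem_cons_of_mem _ hB)) ?_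
    apply exp_mem_unitary_of_mem_skewAdjoint
    rw [skewAdjoint.mem_iff, star_smul, star_trivial, Matrix.star_eq_conjTranspose,
      hl A List.mem_cons_self, smul_neg]

end LocalErrorAux

open LocalErrorAux

/-- The local error of a product of exponentials is bounded by the
integral of the deviation of its logarithmic derivative from C₁ + ⋯ + C_r. -/
theorem local_error_le_integral_of_modified_field {n r : ℕ}
    (C : Fin r → Matrix (Fin n) (Fin n) ℂ)
    (hskew : ∀ j, (C j)ᴴ = -(C j)) (h : ℝ) (hh : 0 ≤ h) :
    ‖(List.ofFn fun j => exp (h • C j)).reverse.prod - exp (h • ∑ j, C j)‖ ≤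
      ∫ t in (0:ℝ)..h,
        ‖deriv (fun τ : ℝ => (List.ofFn fun j => exp (τ • C j)).reverse.prod) t *
            ((List.ofFn fun j => exp (t • C j)).reverse.prod)⁻¹ - ∑ j, C j‖ := by
  classical
  rcases Nat.eq_zero_or_pos n with hn | hn
  · subst hn
    have hz : ∀ x : Matrix (Fin 0) (Fin 0) ℂ, x = 0 := fun x => by
      ext i j; exact i.elim0
    rw [hz (_ - _), norm_zero]
    exact intervalIntegral.integral_nonneg hh fun u _ => norm_nonneg _
  haveI : NeZero n := ⟨hn.ne'⟩
  set l : List (Matrix (Fin n) (Fin n) ℂ) := List.ofFn C with hl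
  set S : Matrix (Fin n) (Fin n) ℂ := ∑ j, C j with hSdef
  have hkey : ∀ t : ℝ, (List.ofFn fun j => exp (t • C j)) = l.map fun A => exp (t • A) := by
    intro t
    rw [hl, List.map_ofFn]
    congr 1
  simp only [hkey]
  have hPsiEq : ∀ t : ℝ, ((l.map fun A => exp (t • A)).reverse.prod :
      Matrix (Fin n) (Fin n) ℂ) = Psi l t := fun t => rfl
  simp only [hPsiEq]
  obtain ⟨D, hDc, hD⟩ := Psi_deriv l
  have hPsic : Continuous (Psi l) :=
    continuous_iff_continuousAt.mpr fun t => (hD t).continuousAt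
  have hmem : ∀ A ∈ l, Aᴴ = -A := by
    intro A hA
    rw [hl, List.mem_ofFn] at hA
    obtain ⟨j, rfl⟩ := hA
    exact hskew j
  have hU : ∀ t, Psi l t ∈ unitary (Matrix (Fin n) (Fin n) ℂ) := Psi_unitary l hmem
  have hstarU : ∀ t, star (Psi l t) * Psi l t = 1 := fun t => (Unitary.mem_iff.mp (hU t)).1
  have hinv : ∀ t, (Psi l t)⁻¹ = star (Psi l t) := fun t => Matrix.inv_eq_left_inv (hstarU t)
  have hSskew : star S = -S := by
    rw [Matrix.star_eq_conjTranspose, hSdef, Matrix.conjTranspose_sum]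
    simp [hskew]
  have hexpS : ∀ s : ℝ, exp (s • S) ∈ unitary (Matrix (Fin n) (Fin n) ℂ) := fun s => by
    apply exp_mem_unitary_of_mem_skewAdjoint
    rw [skewAdjoint.mem_iff, star_smul, star_trivial, hSskew, smul_neg]
  have hnorm1 : ∀ u : Matrix (Fin n) (Fin n) ℂ,
      u ∈ unitary (Matrix (Fin n) (Fin n) ℂ) → ‖u‖ = 1 := fun u hu =>
    CStarRing.norm_of_mem_unitary hu
  set E : ℝ → Matrix (Fin n) (Fin n) ℂ := fun t => exp ((h - t) • S) with hE
  have hEc : Continuous E :=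
    exp_continuous.comp ((continuous_const.sub continuous_id).smul continuous_const)
  have hg : ∀ t : ℝ, HasDerivAt (fun u => E u * Psi l u) (E t * (D t - S * Psi l t)) t := by
    intro t
    have h2 : HasDerivAt (fun u : ℝ => h - u) (-1) t := (hasDerivAt_id t).const_sub h
    have h3 := (hasDerivAt_exp_smul_const' S (h - t)).scomp t h2
    have h1 : HasDerivAt E (-(S * E t)) t := by simp only [neg_one_smul] at h3; exact h3
    have h4 := h1.mul (hD t)
    refine h4.congr_deriv (Eq.symm ?_)
    have hc : E t * S = S * E t :=
      ((((Commute.refl S).smul_left (h - t)).exp_left).eq)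
    rw [mul_sub, ← mul_assoc, hc, mul_assoc, neg_mul, mul_assoc]
    abel
  have hg'c : Continuous fun t => E t * (D t - S * Psi l t) :=
    hEc.mul (hDc.sub (continuous_const.mul hPsic))
  have hFTC : (∫ t in (0:ℝ)..h, E t * (D t - S * Psi l t)) = E h * Psi l h - E 0 * Psi l 0 :=
    intervalIntegral.integral_eq_sub_of_hasDerivAt (fun t _ => hg t)
      (hg'c.intervalIntegrable 0 h)
  have hEh : E h = 1 := by simp [hE]
  have hE0 : E 0 = exp (h • S) := by simp [hE]
  have hmain : Psi l h - exp (h • S) = ∫ t in (0:ℝ)..h, E t * (D t - S * Psi l t) := by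
    rw [hFTC, hEh, hE0, Psi_zero, one_mul, mul_one]
  have hpt : ∀ t ∈ Set.Icc (0:ℝ) h,
      ‖E t * (D t - S * Psi l t)‖ ≤ ‖D t * star (Psi l t) - S‖ := by
    intro t _
    have hX : D t - S * Psi l t = (D t * star (Psi l t) - S) * Psi l t := by
      rw [sub_mul, mul_assoc, hstarU t, mul_one]
    rw [hX]
    calc ‖E t * ((D t * star (Psi l t) - S) * Psi l t)‖
        ≤ ‖E t‖ * ‖(D t * star (Psi l t) - S) * Psi l t‖ := norm_mul_le _ _
      _ ≤ ‖E t‖ * (‖D t * star (Psi l t) - S‖ * ‖Psi l t‖) := by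
          gcongr; exact norm_mul_le _ _
      _ = ‖D t * star (Psi l t) - S‖ := by
          rw [hnorm1 _ (hexpS (h - t)), hnorm1 _ (hU t), one_mul, mul_one]
  have hint2 : IntervalIntegrable (fun t => ‖D t * star (Psi l t) - S‖)
      MeasureTheory.volume 0 h :=
    (((hDc.mul (continuous_star.comp hPsic)).sub continuous_const).norm).intervalIntegrable 0 h
  have hint_eq : ∀ t : ℝ, ‖deriv (fun τ => Psi l τ) t * (Psi l t)⁻¹ - S‖ =
      ‖D t * star (Psi l t) - S‖ := by
    intro t
    rw [hinv t, show deriv (fun τ => Psi l τ) t = D t from (hD t).deriv]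
  calc ‖Psi l h - exp (h • S)‖
      = ‖∫ t in (0:ℝ)..h, E t * (D t - S * Psi l t)‖ := by rw [hmain]
    _ ≤ ∫ t in (0:ℝ)..h, ‖E t * (D t - S * Psi l t)‖ :=
        intervalIntegral.norm_integral_le_integral_norm hh
    _ ≤ ∫ t in (0:ℝ)..h, ‖D t * star (Psi l t) - S‖ :=
        intervalIntegral.integral_mono_on hh (hg'c.norm.intervalIntegrable 0 h) hint2 hpt
    _ = ∫ t in (0:ℝ)..h, ‖deriv (fun τ => Psi l τ) t * (Psi l t)⁻¹ - S‖ := by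
        simp only [hint_eq]
end

section
/- For skew-adjoint matrices A_1, ..., A_N and h ≥ 0, the Lie–Trotter formula satisfies ‖e^{hA_1}···e^{hA_N} − e^{h(A_1+···+A_N)}‖ ≤ (h²/2) Σ_{k=2}^{N} ‖ Σ_{j=1}^{k−1} [A_k, A_j] ‖. -/
open scoped Matrix Matrix.Norms.L2Operator
open NormedSpace

variable {n : ℕ}

local notation "M" => Matrix (Fin n) (Fin n) ℂ

noncomputable instance : CompleteSpace M := FiniteDimensional.complete ℂ _

lemma exp_real_eq (X : M) : exp X = exp X := by
  rfl

lemma norm_one_le_one' : ‖(1 : M)‖ ≤ 1 := by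
  have h := Matrix.l2_opNorm_conjTranspose_mul_self (1 : M)
  simp only [Matrix.conjTranspose_one, one_mul] at h
  nlinarith [norm_nonneg (1 : M)]

lemma norm_exp_skew {X : M} (hX : Xᴴ = -X) : ‖exp X‖ ≤ 1 := by
  have h1 : (exp X)ᴴ * exp X = 1 := by
    rw [← Matrix.exp_conjTranspose, hX,
      ← Matrix.exp_add_of_commute _ _ (Commute.neg_left (Commute.refl X))]
    simp
  have h2 : ‖exp X‖ * ‖exp X‖ = ‖(1 : M)‖ := by
    rw [← Matrix.l2_opNorm_conjTranspose_mul_self, h1]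
  nlinarith [norm_nonneg (exp X), norm_one_le_one' (n := n), norm_nonneg (1 : M)]

lemma skew_smul_s11 {X : M} (hX : Xᴴ = -X) (r : ℝ) : (r • X)ᴴ = -(r • X) := by
  rw [Matrix.conjTranspose_smul, hX, star_trivial, smul_neg]

lemma commute_exp_smul (A : M) (u : ℝ) : exp (u • A) * A = A * exp (u • A) :=
  (((Commute.refl A).smul_left u).exp_left).eq

lemma norm_exp_comm_le {A : M} (hA : Aᴴ = -A) (B : M) {t : ℝ} (ht : 0 ≤ t) :
    ‖exp (t • A) * B - B * exp (t • A)‖ ≤ t * ‖A * B - B * A‖ := by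
  set g : ℝ → M := fun s => exp (s • A) * B * exp ((t - s) • A) with hg
  have hderiv : ∀ s : ℝ,
      HasDerivAt g (exp (s • A) * (A * B - B * A) * exp ((t - s) • A)) s := by
    intro s
    have h1 : HasDerivAt (fun s : ℝ => exp (s • A)) (exp (s • A) * A) s :=
      hasDerivAt_exp_smul_const A s
    have h2 : HasDerivAt (fun s : ℝ => exp ((t - s) • A))
        ((-1 : ℝ) • (exp ((t - s) • A) * A)) s := by
      exact (hasDerivAt_exp_smul_const A (t - s)).scomp s
        (((hasDerivAt_id s).const_sub t))
    have := ((h1.mul_const B).mul h2)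
    refine this.congr_deriv ?_
    have hc := commute_exp_smul A (t - s)
    simp only [neg_one_smul, smul_neg, one_smul]
    rw [hc]
    noncomm_ring
  have hb : ∀ s ∈ Set.Icc (0:ℝ) t,
      ‖exp (s • A) * (A * B - B * A) * exp ((t - s) • A)‖ ≤ ‖A * B - B * A‖ := by
    intro s hs
    have h3 : ‖exp (s • A) * (A * B - B * A) * exp ((t - s) • A)‖
        ≤ ‖exp (s • A)‖ * ‖A * B - B * A‖ * ‖exp ((t - s) • A)‖ :=
      le_trans (norm_mul_le _ _)
        (mul_le_mul_of_nonneg_right (norm_mul_le _ _) (norm_nonneg _))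
    calc ‖exp (s • A) * (A * B - B * A) * exp ((t - s) • A)‖
        ≤ ‖exp (s • A)‖ * ‖A * B - B * A‖ * ‖exp ((t - s) • A)‖ := h3
      _ ≤ 1 * ‖A * B - B * A‖ * 1 := by
          gcongr
          · exact norm_exp_skew (skew_smul_s11 hA s)
          · exact norm_exp_skew (skew_smul_s11 hA (t - s))
      _ = ‖A * B - B * A‖ := by ring
  have key : ‖g t - g 0‖ ≤ ‖A * B - B * A‖ * (t - 0) := by
    apply norm_image_sub_le_of_norm_deriv_le_segment'
      (fun s _ => (hderiv s).hasDerivWithinAt) (fun s hs => hb s (Set.Ico_subset_Icc_self hs))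
    exact Set.right_mem_Icc.2 ht
  have hg0 : g 0 = B * exp (t • A) := by simp [hg]
  have hgt : g t = exp (t • A) * B := by simp [hg]
  rw [hg0, hgt] at key
  linarith

lemma continuous_exp_smul (A : M) : Continuous (fun s : ℝ => exp (s • A)) :=
  continuous_iff_continuousAt.2 fun s => (hasDerivAt_exp_smul_const A s).continuousAt

lemma trotter_two {A B : M} (hA : Aᴴ = -A) (hB : Bᴴ = -B) {h : ℝ} (hh : 0 ≤ h) :
    ‖exp (h • B) * exp (h • A) - exp (h • (A + B))‖ ≤
      h ^ 2 / 2 * ‖A * B - B * A‖ := by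
  set C : M := A + B with hC
  set Φ : ℝ → M := fun s => exp (s • B) * exp (s • A) * exp ((h - s) • C) with hΦ
  set Φ' : ℝ → M := fun s =>
    exp (s • B) * (B * exp (s • A) - exp (s • A) * B) * exp ((h - s) • C) with hΦ'
  have hderiv : ∀ s : ℝ, HasDerivAt Φ (Φ' s) s := by
    intro s
    have h1 : HasDerivAt (fun s : ℝ => exp (s • B)) (exp (s • B) * B) s :=
      hasDerivAt_exp_smul_const B s
    have h2 : HasDerivAt (fun s : ℝ => exp (s • A)) (exp (s • A) * A) s :=
      hasDerivAt_exp_smul_const A s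
    have h3 : HasDerivAt (fun s : ℝ => exp ((h - s) • C))
        ((-1 : ℝ) • (exp ((h - s) • C) * C)) s :=
      (hasDerivAt_exp_smul_const C (h - s)).scomp s ((hasDerivAt_id s).const_sub h)
    have := (h1.mul h2).mul h3
    refine this.congr_deriv ?_
    have hc := commute_exp_smul C (h - s)
    have hb : exp (s • B) * B = B * exp (s • B) := (commute_exp_smul B s).symm ▸ rfl
    simp only [hΦ', neg_one_smul, smul_neg, one_smul, mul_neg, Pi.mul_apply]
    rw [hc, hC]
    noncomm_ring
  have hcont : Continuous Φ' := by
    apply Continuous.mul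
    apply Continuous.mul
    · exact continuous_exp_smul B
    · exact (continuous_const.mul (continuous_exp_smul A)).sub
        ((continuous_exp_smul A).mul continuous_const)
    · exact (continuous_exp_smul C).comp (continuous_const.sub continuous_id)
  have hskewC : Cᴴ = -C := by rw [hC, Matrix.conjTranspose_add, hA, hB]; abel
  have hbound : ∀ s ∈ Set.uIcc (0:ℝ) h, ‖Φ' s‖ ≤ s * ‖A * B - B * A‖ := by
    intro s hs
    rw [Set.uIcc_of_le hh] at hs
    have hs0 : 0 ≤ s := hs.1
    have hmid : ‖B * exp (s • A) - exp (s • A) * B‖ ≤ s * ‖A * B - B * A‖ := by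
      have := norm_exp_comm_le hA B hs0
      rw [← norm_neg] at this
      simpa [neg_sub] using this
    have h3 : ‖Φ' s‖ ≤ ‖exp (s • B)‖ * ‖B * exp (s • A) - exp (s • A) * B‖ *
        ‖exp ((h - s) • C)‖ :=
      le_trans (norm_mul_le _ _)
        (mul_le_mul_of_nonneg_right (norm_mul_le _ _) (norm_nonneg _))
    calc ‖Φ' s‖ ≤ ‖exp (s • B)‖ * ‖B * exp (s • A) - exp (s • A) * B‖ *
          ‖exp ((h - s) • C)‖ := h3
      _ ≤ 1 * (s * ‖A * B - B * A‖) * 1 := by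
          gcongr
          all_goals first
            | exact norm_exp_skew (skew_smul_s11 hB s)
            | exact norm_exp_skew (skew_smul_s11 hskewC (h - s))
      _ = s * ‖A * B - B * A‖ := by ring
  have hint : Φ h - Φ 0 = ∫ s in (0:ℝ)..h, Φ' s :=
    (intervalIntegral.integral_eq_sub_of_hasDerivAt (fun s _ => hderiv s)
      (hcont.intervalIntegrable 0 h)).symm
  have hnorm : ‖Φ h - Φ 0‖ ≤ h ^ 2 / 2 * ‖A * B - B * A‖ := by
    rw [hint]
    have hae : ∀ᵐ t ∂MeasureTheory.volume.restrict (Set.uIoc (0:ℝ) h),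
        ‖Φ' t‖ ≤ t * ‖A * B - B * A‖ := by
      refine (MeasureTheory.ae_restrict_iff' measurableSet_uIoc).2
        (Filter.Eventually.of_forall fun s hs => hbound s ?_)
      exact Set.uIoc_subset_uIcc hs
    have hgint : IntervalIntegrable (fun s : ℝ => s * ‖A * B - B * A‖)
        MeasureTheory.volume 0 h :=
      (continuous_id.mul continuous_const).intervalIntegrable 0 h
    refine (intervalIntegral.norm_integral_le_abs_of_norm_le hae hgint).trans_eq ?_
    rw [intervalIntegral.integral_mul_const, integral_id]
    have he : ((h:ℝ) ^ 2 - 0 ^ 2) / 2 = h ^ 2 / 2 := by ring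
    rw [he, abs_of_nonneg (by positivity)]
  have hΦh : Φ h = exp (h • B) * exp (h • A) := by simp [hΦ]
  have hΦ0 : Φ 0 = exp (h • C) := by simp [hΦ]
  rw [hΦh, hΦ0] at hnorm
  exact hnorm

lemma main_aux (N : ℕ) (A : ℕ → M) (hskew : ∀ j, (A j)ᴴ = -(A j)) (h : ℝ) (hh : 0 ≤ h) :
    ‖(List.ofFn fun i : Fin N => exp (h • A ((i : ℕ) + 1))).prod -
        exp (h • ∑ j ∈ Finset.Icc 1 N, A j)‖ ≤
      h ^ 2 / 2 * ∑ k ∈ Finset.Icc 2 N,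
        ‖∑ j ∈ Finset.Icc 1 (k - 1), (A k * A j - A j * A k)‖ := by
  induction N with
  | zero =>
      simp [Finset.Icc_eq_empty_of_lt, exp_zero]
  | succ N ih =>
      set S : M := ∑ j ∈ Finset.Icc 1 N, A j with hS
      set a : M := A (N + 1) with ha
      set Q : M := (List.ofFn fun i : Fin N => exp (h • A ((i : ℕ) + 1))).prod with hQ
      have hlist : (List.ofFn fun i : Fin (N + 1) => exp (h • A ((i : ℕ) + 1))).prod
          = Q * exp (h • a) := by
        rw [List.ofFn_succ']
        simp [hQ, ha]
      have hsum : ∑ j ∈ Finset.Icc 1 (N + 1), A j = S + a := by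
        rw [Finset.sum_Icc_succ_top (Nat.succ_le_succ (Nat.zero_le N))]
      have hSskew : Sᴴ = -S := by
        rw [hS, Matrix.conjTranspose_sum]
        simp [hskew, Finset.sum_neg_distrib]
      have key : ‖exp (h • S) * exp (h • a) - exp (h • (a + S))‖ ≤
          h ^ 2 / 2 * ‖a * S - S * a‖ := trotter_two (hskew (N + 1)) hSskew hh
      have hcomm : a * S - S * a = ∑ j ∈ Finset.Icc 1 N, (a * A j - A j * a) := by
        rw [hS, Finset.mul_sum, Finset.sum_mul, ← Finset.sum_sub_distrib]
      have hu : ‖exp (h • a)‖ ≤ 1 := norm_exp_skew (skew_smul_s11 (hskew (N + 1)) h)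
      have tri : ‖Q * exp (h • a) - exp (h • (S + a))‖ ≤
          ‖Q - exp (h • S)‖ + h ^ 2 / 2 * ‖a * S - S * a‖ := by
        have hdecomp : Q * exp (h • a) - exp (h • (S + a)) =
            (Q - exp (h • S)) * exp (h • a) +
              (exp (h • S) * exp (h • a) - exp (h • (a + S))) := by
          rw [add_comm a S]
          noncomm_ring
        rw [hdecomp]
        refine (norm_add_le _ _).trans (add_le_add ?_ key)
        · calc ‖(Q - exp (h • S)) * exp (h • a)‖
              ≤ ‖Q - exp (h • S)‖ * ‖exp (h • a)‖ := norm_mul_le _ _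
            _ ≤ ‖Q - exp (h • S)‖ * 1 :=
              mul_le_mul_of_nonneg_left hu (norm_nonneg _)
            _ = ‖Q - exp (h • S)‖ := mul_one _
      rw [hlist, hsum]
      refine tri.trans ?_
      have hfinal : h ^ 2 / 2 * ∑ k ∈ Finset.Icc 2 N,
            ‖∑ j ∈ Finset.Icc 1 (k - 1), (A k * A j - A j * A k)‖ +
            h ^ 2 / 2 * ‖a * S - S * a‖ ≤
          h ^ 2 / 2 * ∑ k ∈ Finset.Icc 2 (N + 1),
            ‖∑ j ∈ Finset.Icc 1 (k - 1), (A k * A j - A j * A k)‖ := by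
        rcases Nat.eq_zero_or_pos N with hN | hN
        · subst hN
          simp [hcomm]
        · rw [Finset.sum_Icc_succ_top (Nat.succ_le_succ hN)]
          rw [mul_add]
          gcongr
          rw [hcomm]
          simp [ha]
      calc ‖Q - exp (h • S)‖ + h ^ 2 / 2 * ‖a * S - S * a‖
          ≤ h ^ 2 / 2 * ∑ k ∈ Finset.Icc 2 N,
              ‖∑ j ∈ Finset.Icc 1 (k - 1), (A k * A j - A j * A k)‖ +
            h ^ 2 / 2 * ‖a * S - S * a‖ := add_le_add_left ih _
        _ ≤ _ := hfinal

/-- Commutator bound for the Lie–Trotter splitting with N operators. -/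
theorem lie_trotter_commutator_bound {n N : ℕ}
    (A : ℕ → Matrix (Fin n) (Fin n) ℂ)
    (hskew : ∀ j, (A j)ᴴ = -(A j)) (h : ℝ) (hh : 0 ≤ h) :
    ‖(List.ofFn fun i : Fin N => exp (h • A ((i : ℕ) + 1))).prod -
        exp (h • ∑ j ∈ Finset.Icc 1 N, A j)‖ ≤
      h ^ 2 / 2 * ∑ k ∈ Finset.Icc 2 N,
        ‖∑ j ∈ Finset.Icc 1 (k - 1), (A k * A j - A j * A k)‖ := by
  exact main_aux N A hskew h hh
end

section
/- For skew-adjoint matrices A_1, A_2 and h ≥ 0, the Strang splitting satisfies ‖e^{h(A_1+A_2)} − e^{(h/2)A_1} e^{hA_2} e^{(h/2)A_1}‖ ≤ (h³/12)‖[A_2,[A_1,A_2]]‖ + (h³/24)‖[A_1,[A_1,A_2]]‖. -/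
set_option maxHeartbeats 1000000

open scoped Matrix Matrix.Norms.L2Operator
open NormedSpace

namespace StrangAux

variable {n : ℕ}

local notation "𝕄" => Matrix (Fin n) (Fin n) ℂ

noncomputable def instQ : NormedAlgebra ℚ 𝕄 := .restrictScalars ℚ ℂ 𝕄

attribute [local instance] instQ

noncomputable def Ee (M : 𝕄) (t : ℝ) : 𝕄 := exp (t • M)

lemma hasDerivAt_Ee (M : 𝕄) (t : ℝ) : HasDerivAt (Ee M) (M * Ee M t) t :=
  hasDerivAt_exp_smul_const' (𝕂 := ℝ) M t

lemma Ee_comm (M : 𝕄) (t : ℝ) : M * Ee M t = Ee M t * M :=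
  (((Commute.refl M).smul_right t).exp_right).eq

lemma Ee_zero (M : 𝕄) : Ee M 0 = 1 := by simp [Ee]

lemma Ee_add (M : 𝕄) (s t : ℝ) : Ee M (s + t) = Ee M s * Ee M t := by
  rw [Ee, Ee, Ee, add_smul]
  exact exp_add_of_commute (((Commute.refl M).smul_left s).smul_right t)

lemma Ee_cancel (M : 𝕄) (t : ℝ) : Ee M t * Ee M (-t) = 1 := by
  rw [← Ee_add, add_neg_cancel, Ee_zero]

lemma Ee_cancel' (M : 𝕄) (t : ℝ) : Ee M (-t) * Ee M t = 1 := by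
  rw [← Ee_add, neg_add_cancel, Ee_zero]

lemma continuous_Ee (M : 𝕄) : Continuous (Ee M) :=
  exp_continuous.comp (continuous_id.smul continuous_const)

lemma Ee_unitary {M : 𝕄} (hM : Mᴴ = -M) (t : ℝ) : Ee M t ∈ unitary 𝕄 := by
  apply exp_mem_unitary_of_mem_skewAdjoint
  rw [skewAdjoint.mem_iff, star_smul, star_trivial, Matrix.star_eq_conjTranspose, hM, smul_neg]

lemma norm_unit_mul {u : 𝕄} (hu : u ∈ unitary 𝕄) (x : 𝕄) : ‖u * x‖ = ‖x‖ :=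
  CStarRing.norm_mem_unitary_mul x hu

lemma norm_mul_unit {u : 𝕄} (hu : u ∈ unitary 𝕄) (x : 𝕄) : ‖x * u‖ = ‖x‖ :=
  CStarRing.norm_mul_mem_unitary x hu

/-- conjugation `Ad_{e^{tM}} X` -/
noncomputable def Ad (M X : 𝕄) (t : ℝ) : 𝕄 := Ee M t * X * Ee M (-t)

lemma Ad_zero (M X : 𝕄) : Ad M X 0 = X := by simp [Ad, Ee_zero]

lemma continuous_Ad (M X : 𝕄) : Continuous (Ad M X) :=
  ((continuous_Ee M).mul continuous_const).mul ((continuous_Ee M).comp continuous_neg)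

lemma hasDerivAt_Ad (M X : 𝕄) (t : ℝ) :
    HasDerivAt (Ad M X) (Ad M (M * X - X * M) t) t := by
  have h2 : HasDerivAt (fun s : ℝ => Ee M (-s)) (-(M * Ee M (-t))) t := by
    have := (hasDerivAt_Ee M (-t)).scomp t (hasDerivAt_neg t)
    simpa [Function.comp_def] using this
  have h := ((hasDerivAt_Ee M t).mul_const X).mul h2
  refine h.congr_deriv (Eq.symm ?_)
  unfold Ad
  rw [show M * Ee M t = Ee M t * M from Ee_comm M t]
  noncomm_ring

lemma Ad_of_commute {M X : 𝕄} (hc : Commute M X) (t : ℝ) : Ad M X t = X := by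
  have : Commute (Ee M t) X := ((hc.smul_left t).exp_left)
  rw [Ad, this.eq, mul_assoc, Ee_cancel, mul_one]

lemma norm_Ad {M : 𝕄} (hM : Mᴴ = -M) (X : 𝕄) (t : ℝ) : ‖Ad M X t‖ = ‖X‖ := by
  rw [Ad, norm_mul_unit (Ee_unitary hM (-t)), norm_unit_mul (Ee_unitary hM t)]

/-- fundamental-theorem-of-calculus norm bound helper -/
lemma norm_le_integral {f f' : ℝ → 𝕄} {g : ℝ → ℝ} {t : ℝ}
    (hf : ∀ r, HasDerivAt f (f' r) r) (hcont : Continuous f') (h0 : f 0 = 0)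
    (hg : Continuous g) (ht : 0 ≤ t) (hb : ∀ r ∈ Set.Icc (0:ℝ) t, ‖f' r‖ ≤ g r) :
    ‖f t‖ ≤ ∫ r in (0:ℝ)..t, g r := by
  have key : ∫ r in (0:ℝ)..t, f' r = f t - f 0 :=
    intervalIntegral.integral_eq_sub_of_hasDerivAt (fun r _ => hf r)
      (hcont.intervalIntegrable _ _)
  rw [h0, sub_zero] at key
  rw [← key]
  calc ‖∫ r in (0:ℝ)..t, f' r‖ ≤ ∫ r in (0:ℝ)..t, ‖f' r‖ :=
        intervalIntegral.norm_integral_le_integral_norm ht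
    _ ≤ ∫ r in (0:ℝ)..t, g r := by
        apply intervalIntegral.integral_mono_on ht (hcont.norm.intervalIntegrable _ _)
          (hg.intervalIntegrable _ _)
        exact hb

lemma norm_le_linear {f f' : ℝ → 𝕄} {c t : ℝ}
    (hf : ∀ r, HasDerivAt f (f' r) r) (hcont : Continuous f') (h0 : f 0 = 0)
    (ht : 0 ≤ t) (hb : ∀ r ∈ Set.Icc (0:ℝ) t, ‖f' r‖ ≤ c) :
    ‖f t‖ ≤ c * t := by
  have := norm_le_integral hf hcont h0 continuous_const ht hb
  simpa [mul_comm] using this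

lemma norm_le_quadratic {f f' : ℝ → 𝕄} {c t : ℝ}
    (hf : ∀ r, HasDerivAt f (f' r) r) (hcont : Continuous f') (h0 : f 0 = 0)
    (ht : 0 ≤ t) (hb : ∀ r ∈ Set.Icc (0:ℝ) t, ‖f' r‖ ≤ c * r) :
    ‖f t‖ ≤ c * t ^ 2 / 2 := by
  have := norm_le_integral hf hcont h0 (continuous_const.mul continuous_id) ht hb
  calc ‖f t‖ ≤ ∫ r in (0:ℝ)..t, c * r := this
    _ = c * t ^ 2 / 2 := by
        rw [intervalIntegral.integral_const_mul, integral_id]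
        ring

lemma norm_le_cubic {f f' : ℝ → 𝕄} {c t : ℝ}
    (hf : ∀ r, HasDerivAt f (f' r) r) (hcont : Continuous f') (h0 : f 0 = 0)
    (ht : 0 ≤ t) (hb : ∀ r ∈ Set.Icc (0:ℝ) t, ‖f' r‖ ≤ c * r ^ 2) :
    ‖f t‖ ≤ c * t ^ 3 / 3 := by
  have := norm_le_integral hf hcont h0 (continuous_const.mul (continuous_pow 2)) ht hb
  calc ‖f t‖ ≤ ∫ r in (0:ℝ)..t, c * r ^ 2 := this
    _ = c * t ^ 3 / 3 := by
        rw [intervalIntegral.integral_const_mul, integral_pow]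
        ring

/-! ### Main development -/

section Main

variable (A B : Matrix (Fin n) (Fin n) ℂ)

noncomputable def Ah : 𝕄 := (1/2 : ℝ) • A

noncomputable def Cc : 𝕄 := Ah A * B - B * Ah A

noncomputable def CAh : 𝕄 := Ah A * Cc A B - Cc A B * Ah A

noncomputable def CBh : 𝕄 := B * Cc A B - Cc A B * B

noncomputable def Ss (t : ℝ) : 𝕄 := Ee (Ah A) t * Ee B t * Ee (Ah A) t

noncomputable def Ff (h t : ℝ) : 𝕄 := Ee (A + B) (h - t) * Ss A B t

noncomputable def Rr (t : ℝ) : 𝕄 :=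
  (Ad (Ah A) B t - B) +
    (Ee (Ah A) t * Ee B t * Ah A * Ee B (-t) * Ee (Ah A) (-t) - Ah A)

noncomputable def ρρ (t : ℝ) : 𝕄 := Ad B (Ah A) t - Ah A + t • Cc A B

noncomputable def σσ (t : ℝ) : 𝕄 := (Ad (Ah A) B t - B) - t • Ad (Ah A) (Cc A B) t

lemma Ah_skew (hA : Aᴴ = -A) : (Ah A)ᴴ = -(Ah A) := by
  rw [Ah, Matrix.conjTranspose_smul, star_trivial, hA, smul_neg]

lemma add_skew (hA : Aᴴ = -A) (hB : Bᴴ = -B) : (A + B)ᴴ = -(A + B) := by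
  rw [Matrix.conjTranspose_add, hA, hB, neg_add]

lemma Ah_add_Ah : Ah A + Ah A = A := by
  rw [Ah, ← add_smul]; norm_num

lemma defect_abstract {R : Type*} [Ring R] (a b u u' v v' : R)
    (huu : u' * u = 1) (hvv : v' * v = 1) :
    (a * u * v + u * (b * v)) * u + u * v * (a * u) - (a + a + b) * (u * v * u)
      = ((u * b * u' - b) + (u * v * a * v' * u' - a)) * (u * v * u) := by
  have cu : ∀ z : R, u' * (u * z) = z := fun z => by rw [← mul_assoc, huu, one_mul]
  have cv : ∀ z : R, v' * (v * z) = z := fun z => by rw [← mul_assoc, hvv, one_mul]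
  simp only [add_mul, sub_mul, mul_assoc, cu, cv]
  abel

lemma Ss_unitary (hA : Aᴴ = -A) (hB : Bᴴ = -B) (t : ℝ) : Ss A B t ∈ unitary 𝕄 :=
  mul_mem (mul_mem (Ee_unitary (Ah_skew A hA) t) (Ee_unitary hB t))
    (Ee_unitary (Ah_skew A hA) t)

lemma hasDerivAt_Ff (h t : ℝ) :
    HasDerivAt (Ff A B h) (Ee (A + B) (h - t) * (Rr A B t * Ss A B t)) t := by
  have hU := hasDerivAt_Ee (Ah A) t
  have hV := hasDerivAt_Ee B t
  have hS := (hU.mul hV).mul hU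
  have hEL : HasDerivAt (fun s : ℝ => Ee (A + B) (h - s))
      (-((A + B) * Ee (A + B) (h - t))) t := by
    have := (hasDerivAt_Ee (A + B) (h - t)).scomp t ((hasDerivAt_id t).const_sub h)
    simpa [Function.comp_def] using this
  have hF := hEL.mul hS
  have key : Ee (A + B) (h - t) * (Rr A B t * Ss A B t) =
      -((A + B) * Ee (A + B) (h - t)) * (Ee (Ah A) t * Ee B t * Ee (Ah A) t) +
        Ee (A + B) (h - t) *
          ((Ah A * Ee (Ah A) t * Ee B t + Ee (Ah A) t * (B * Ee B t)) * Ee (Ah A) t +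
            Ee (Ah A) t * Ee B t * (Ah A * Ee (Ah A) t)) := by
    have hd := defect_abstract (Ah A) B (Ee (Ah A) t) (Ee (Ah A) (-t)) (Ee B t) (Ee B (-t))
      (Ee_cancel' (Ah A) t) (Ee_cancel' B t)
    have hAB : A + B = Ah A + Ah A + B := by rw [Ah_add_Ah]
    rw [Rr, Ad, Ss, hAB]
    rw [← hd]
    rw [show (Ah A + Ah A + B) * Ee (Ah A + Ah A + B) (h - t)
        = Ee (Ah A + Ah A + B) (h - t) * (Ah A + Ah A + B) from Ee_comm _ _]
    noncomm_ring
  rw [key]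
  exact hF

lemma R_decomp (t : ℝ) : Rr A B t = σσ A B t + Ad (Ah A) (ρρ A B t) t := by
  have hc : Ee (Ah A) t * (Ah A * Ee (Ah A) (-t)) = Ah A := by
    have := Ad_of_commute (Commute.refl (Ah A)) t
    rw [Ad] at this
    rw [← mul_assoc, this]
  simp only [Rr, σσ, ρρ, Ad, mul_add, add_mul, mul_sub, sub_mul, mul_smul_comm,
    smul_mul_assoc, mul_assoc, hc]
  abel

lemma hasDerivAt_ρρ (t : ℝ) :
    HasDerivAt (ρρ A B) (Cc A B - Ad B (Cc A B) t) t := by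
  have h1 := (hasDerivAt_Ad B (Ah A) t).sub_const (Ah A)
  have h2 : HasDerivAt (fun s : ℝ => s • Cc A B) ((1:ℝ) • Cc A B) t :=
    (hasDerivAt_id t).smul_const _
  have h := h1.add h2
  refine h.congr_deriv (Eq.symm ?_)
  have e1 : B * Ah A - Ah A * B = -(Cc A B) := by rw [Cc]; abel
  rw [e1, one_smul]
  have e2 : Ad B (-(Cc A B)) t = -(Ad B (Cc A B) t) := by
    simp [Ad, mul_neg, neg_mul]
  rw [e2]
  abel

lemma hasDerivAt_σσ (t : ℝ) :
    HasDerivAt (σσ A B) (-(t • Ad (Ah A) (CAh A B) t)) t := by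
  have h1 := (hasDerivAt_Ad (Ah A) B t).sub_const B
  have h2 : HasDerivAt (fun s : ℝ => s • Ad (Ah A) (Cc A B) s)
      (t • Ad (Ah A) (CAh A B) t + (1:ℝ) • Ad (Ah A) (Cc A B) t) t := by
    have := (hasDerivAt_id t).smul (hasDerivAt_Ad (Ah A) (Cc A B) t)
    exact this
  have h := h1.sub h2
  refine h.congr_deriv (Eq.symm ?_)
  have e1 : Ah A * B - B * Ah A = Cc A B := by rw [Cc]
  rw [e1, one_smul]
  abel

lemma norm_ρρ_le (hA : Aᴴ = -A) (hB : Bᴴ = -B) {t : ℝ} (ht : 0 ≤ t) :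
    ‖ρρ A B t‖ ≤ ‖CBh A B‖ * t ^ 2 / 2 := by
  have inner : ∀ r ∈ Set.Icc (0:ℝ) t, ‖Cc A B - Ad B (Cc A B) r‖ ≤ ‖CBh A B‖ * r := by
    intro r hr
    apply norm_le_linear (f := fun s => Cc A B - Ad B (Cc A B) s) (f' := fun s => -(Ad B (CBh A B) s))
    · intro s
      have := (hasDerivAt_Ad B (Cc A B) s).const_sub (Cc A B)
      have e : B * Cc A B - Cc A B * B = CBh A B := by rw [CBh]
      rwa [e] at this
    · exact (continuous_Ad B (CBh A B)).neg
    · simp [Ad_zero]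
    · exact hr.1
    · intro s _
      rw [norm_neg, norm_Ad hB]
  apply norm_le_quadratic (f := ρρ A B) (f' := fun r => Cc A B - Ad B (Cc A B) r)
  · exact hasDerivAt_ρρ A B
  · exact continuous_const.sub (continuous_Ad B (Cc A B))
  · simp [ρρ, Ad_zero]
  · exact ht
  · exact inner

lemma norm_σσ_le (hA : Aᴴ = -A) {t : ℝ} (ht : 0 ≤ t) :
    ‖σσ A B t‖ ≤ ‖CAh A B‖ * t ^ 2 / 2 := by
  apply norm_le_quadratic (f := σσ A B) (f' := fun r => -(r • Ad (Ah A) (CAh A B) r))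
  · exact hasDerivAt_σσ A B
  · exact (continuous_id.smul (continuous_Ad (Ah A) (CAh A B))).neg
  · simp [σσ, Ad_zero]
  · exact ht
  · intro r hr
    rw [norm_neg, norm_smul, norm_Ad (Ah_skew A hA), Real.norm_eq_abs,
      abs_of_nonneg hr.1, mul_comm]

lemma norm_Rr_le (hA : Aᴴ = -A) (hB : Bᴴ = -B) {t : ℝ} (ht : 0 ≤ t) :
    ‖Rr A B t‖ ≤ (‖CAh A B‖ + ‖CBh A B‖) / 2 * t ^ 2 := by
  rw [R_decomp]
  calc ‖σσ A B t + Ad (Ah A) (ρρ A B t) t‖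
      ≤ ‖σσ A B t‖ + ‖Ad (Ah A) (ρρ A B t) t‖ := norm_add_le _ _
    _ = ‖σσ A B t‖ + ‖ρρ A B t‖ := by rw [norm_Ad (Ah_skew A hA)]
    _ ≤ ‖CAh A B‖ * t ^ 2 / 2 + ‖CBh A B‖ * t ^ 2 / 2 :=
        add_le_add (norm_σσ_le A B hA ht) (norm_ρρ_le A B hA hB ht)
    _ = (‖CAh A B‖ + ‖CBh A B‖) / 2 * t ^ 2 := by ring

lemma Cc_eq : Cc A B = (1/2 : ℝ) • (A * B - B * A) := by
  rw [Cc, Ah, smul_mul_assoc, mul_smul_comm, ← smul_sub]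

lemma norm_CAh : ‖CAh A B‖ = 1/4 * ‖A * (A * B - B * A) - (A * B - B * A) * A‖ := by
  have : CAh A B = (1/4 : ℝ) • (A * (A * B - B * A) - (A * B - B * A) * A) := by
    rw [CAh, Cc_eq, Ah, smul_mul_assoc, mul_smul_comm, smul_mul_assoc, mul_smul_comm,
      smul_smul, smul_smul, ← smul_sub]
    norm_num
  rw [this, norm_smul]
  norm_num

lemma norm_CBh : ‖CBh A B‖ = 1/2 * ‖B * (A * B - B * A) - (A * B - B * A) * B‖ := by
  have : CBh A B = (1/2 : ℝ) • (B * (A * B - B * A) - (A * B - B * A) * B) := by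
    rw [CBh, Cc_eq, mul_smul_comm, smul_mul_assoc, ← smul_sub]
  rw [this, norm_smul]
  norm_num

lemma continuous_Ss : Continuous (Ss A B) :=
  ((continuous_Ee _).mul (continuous_Ee _)).mul (continuous_Ee _)

lemma continuous_Rr : Continuous (Rr A B) := by
  unfold Rr
  exact ((continuous_Ad _ _).sub continuous_const).add
    (((((((continuous_Ee _).mul (continuous_Ee _)).mul continuous_const).mul
      ((continuous_Ee _).comp continuous_neg)).mul
      ((continuous_Ee _).comp continuous_neg)).sub continuous_const))

lemma main_bound (hA : Aᴴ = -A) (hB : Bᴴ = -B) {h : ℝ} (hh : 0 ≤ h) :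
    ‖Ee (A + B) h - Ss A B h‖ ≤
      h ^ 3 / 24 * ‖A * (A * B - B * A) - (A * B - B * A) * A‖ +
        h ^ 3 / 12 * ‖B * (A * B - B * A) - (A * B - B * A) * B‖ := by
  set c : ℝ := (‖CAh A B‖ + ‖CBh A B‖) / 2 with hc
  have key : ‖Ff A B h h - Ff A B h 0‖ ≤ c * h ^ 3 / 3 := by
    apply norm_le_cubic (f := fun t => Ff A B h t - Ff A B h 0)
      (f' := fun t => Ee (A + B) (h - t) * (Rr A B t * Ss A B t))
    · exact fun r => (hasDerivAt_Ff A B h r).sub_const _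
    · exact ((continuous_Ee _).comp (continuous_const.sub continuous_id)).mul
        ((continuous_Rr A B).mul (continuous_Ss A B))
    · simp
    · exact hh
    · intro r hr
      rw [norm_unit_mul (Ee_unitary (add_skew A B hA hB) _),
        norm_mul_unit (Ss_unitary A B hA hB r)]
      exact norm_Rr_le A B hA hB hr.1
  have e1 : Ff A B h h = Ss A B h := by
    rw [Ff, sub_self, Ee_zero, one_mul]
  have e2 : Ff A B h 0 = Ee (A + B) h := by
    simp [Ff, Ss, Ee_zero]
  rw [e1, e2] at key
  have : ‖Ee (A + B) h - Ss A B h‖ = ‖Ss A B h - Ee (A + B) h‖ := by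
    rw [← norm_neg, neg_sub]
  rw [this]
  calc ‖Ss A B h - Ee (A + B) h‖ ≤ c * h ^ 3 / 3 := key
    _ = h ^ 3 / 24 * ‖A * (A * B - B * A) - (A * B - B * A) * A‖ +
        h ^ 3 / 12 * ‖B * (A * B - B * A) - (A * B - B * A) * B‖ := by
      rw [hc, norm_CAh, norm_CBh]
      ring

end Main

end StrangAux

open StrangAux in
/-- Optimal commutator bound for the Strang splitting with two
skew-adjoint operators. -/
theorem strang_splitting_commutator_bound {n : ℕ}
    (A₁ A₂ : Matrix (Fin n) (Fin n) ℂ)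
    (h1 : A₁ᴴ = -A₁) (h2 : A₂ᴴ = -A₂) (h : ℝ) (hh : 0 ≤ h) :
    ‖exp (h • (A₁ + A₂)) -
        exp ((h / 2) • A₁) * exp (h • A₂) * exp ((h / 2) • A₁)‖ ≤
      h ^ 3 / 12 * ‖A₂ * (A₁ * A₂ - A₂ * A₁) - (A₁ * A₂ - A₂ * A₁) * A₂‖ +
        h ^ 3 / 24 * ‖A₁ * (A₁ * A₂ - A₂ * A₁) - (A₁ * A₂ - A₂ * A₁) * A₁‖ := by
  have eexp : (exp : Matrix (Fin n) (Fin n) ℂ → Matrix (Fin n) (Fin n) ℂ) = exp :=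
    rfl
  have eA : exp ((h / 2) • A₁) = Ee (Ah A₁) h := by
    rw [Ee, Ah, smul_smul, mul_one_div]
  have eB : exp (h • A₂) = Ee A₂ h := by rw [Ee]
  have eL : exp (h • (A₁ + A₂)) = Ee (A₁ + A₂) h := by rw [Ee]
  rw [eA, eB, eL]
  have := main_bound A₁ A₂ h1 h2 hh
  rw [show Ee (Ah A₁) h * Ee A₂ h * Ee (Ah A₁) h = Ss A₁ A₂ h from rfl]
  linarith
end

section
/- Let Θ(t) be a differentiable family of unitary matrices with Θ(0) = I and M(t) = Θ'(t)Θ(t)^{-1}. Then for all h ≥ 0, ‖Θ(h) − Θ(−h)‖ ≤ ∫_0^h ‖M(t) + M(−t)‖ dt. -/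
open scoped Matrix Matrix.Norms.L2Operator
open NormedSpace

private lemma norm_unitary_conj_aux {n : ℕ}
    (U V A : Matrix (Fin n) (Fin n) ℂ)
    (hU2 : U * Uᴴ = 1) (hV2 : V * Vᴴ = 1)
    (hnU : ‖U‖ = 1) (hnV : ‖V‖ = 1) :
    ‖Uᴴ * A * V‖ = ‖A‖ := by
  have hnUc : ‖Uᴴ‖ = 1 := by rw [Matrix.l2_opNorm_conjTranspose, hnU]
  have hnVc : ‖Vᴴ‖ = 1 := by rw [Matrix.l2_opNorm_conjTranspose, hnV]
  apply le_antisymm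
  · calc ‖Uᴴ * A * V‖ ≤ ‖Uᴴ * A‖ * ‖V‖ := norm_mul_le _ _
      _ ≤ ‖Uᴴ‖ * ‖A‖ * ‖V‖ := by
          gcongr; exact norm_mul_le _ _
      _ = ‖A‖ := by rw [hnUc, hnV, one_mul, mul_one]
  · have hA : A = U * (Uᴴ * A * V) * Vᴴ := by
      have : U * (Uᴴ * A * V) * Vᴴ = U * Uᴴ * A * (V * Vᴴ) := by
        simp only [Matrix.mul_assoc]
      rw [this, hU2, hV2, Matrix.one_mul, Matrix.mul_one]
    calc ‖A‖ = ‖U * (Uᴴ * A * V) * Vᴴ‖ := by rw [← hA]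
      _ ≤ ‖U * (Uᴴ * A * V)‖ * ‖Vᴴ‖ := norm_mul_le _ _
      _ ≤ ‖U‖ * ‖Uᴴ * A * V‖ * ‖Vᴴ‖ := by gcongr; exact norm_mul_le _ _
      _ = ‖Uᴴ * A * V‖ := by rw [hnU, hnVc, one_mul, mul_one]

/-- For a differentiable family of unitary matrices Θ with Θ(0)=I and
logarithmic derivative M(t)=Θ'(t)Θ(t)⁻¹, one has
‖Θ(h) − Θ(−h)‖ ≤ ∫₀ʰ ‖M(t) + M(−t)‖ dt. -/
theorem unitary_family_symmetric_difference_bound {n : ℕ}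
    (Θ : ℝ → Matrix (Fin n) (Fin n) ℂ)
    (hΘ : ContDiff ℝ 1 Θ)
    (hU : ∀ t : ℝ, (Θ t)ᴴ * Θ t = 1)
    (hΘ0 : Θ 0 = 1) (h : ℝ) (hh : 0 ≤ h) :
    ‖Θ h - Θ (-h)‖ ≤
      ∫ t in (0:ℝ)..h,
        ‖deriv Θ t * (Θ t)⁻¹ + deriv Θ (-t) * (Θ (-t))⁻¹‖ := by
  rcases Nat.eq_zero_or_pos n with hn | hn
  · subst hn
    have h0 : Θ h - Θ (-h) = 0 := Subsingleton.elim _ _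
    rw [h0, norm_zero]
    exact intervalIntegral.integral_nonneg hh fun t _ => norm_nonneg _
  haveI : Nonempty (Fin n) := ⟨⟨0, hn⟩⟩
  haveI : ContinuousStar (Matrix (Fin n) (Fin n) ℂ) :=
    ⟨(Isometry.of_dist_eq fun a b => by
        simp only [dist_eq_norm, Matrix.star_eq_conjTranspose, ← Matrix.conjTranspose_sub,
          Matrix.l2_opNorm_conjTranspose]).continuous⟩
  -- basic facts
  have hU' : ∀ t : ℝ, Θ t * (Θ t)ᴴ = 1 := fun t => mul_eq_one_comm.mp (hU t)
  have hinv : ∀ t : ℝ, (Θ t)⁻¹ = (Θ t)ᴴ := fun t => Matrix.inv_eq_left_inv (hU t)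
  have hone : ‖(1 : Matrix (Fin n) (Fin n) ℂ)‖ = 1 := by
    rw [Matrix.cstar_norm_def, map_one, norm_one]
  have hnorm : ∀ t : ℝ, ‖Θ t‖ = 1 := by
    intro t
    have := Matrix.l2_opNorm_conjTranspose_mul_self (Θ t)
    rw [hU t, hone] at this
    nlinarith [norm_nonneg (Θ t)]
  have hd : Differentiable ℝ Θ := hΘ.differentiable one_ne_zero
  have hdc : Continuous (deriv Θ) := hΘ.continuous_deriv le_rfl
  -- the function G and its derivative
  set G : ℝ → Matrix (Fin n) (Fin n) ℂ := fun t => star (Θ t) * Θ (-t) with hGdef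
  set G' : ℝ → Matrix (Fin n) (Fin n) ℂ :=
    fun t => star (deriv Θ t) * Θ (-t) - star (Θ t) * deriv Θ (-t) with hG'def
  have hG : ∀ t : ℝ, HasDerivAt G (G' t) t := by
    intro t
    have h1 : HasDerivAt (fun s => star (Θ s)) (star (deriv Θ t)) t := (hd t).hasDerivAt.star
    have h2 : HasDerivAt (fun s : ℝ => Θ (-s)) (-deriv Θ (-t)) t := by
      have := (hd (-t)).hasDerivAt.scomp t (hasDerivAt_neg t)
      simp at this; exact this
    have := h1.mul h2
    simp [hG'def, mul_neg, sub_eq_add_neg] at this; exact this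
  have hG'cont : Continuous G' :=
    ((hdc.star).mul (hΘ.continuous.comp continuous_neg)).sub
      ((hΘ.continuous.star).mul (hdc.comp continuous_neg))
  -- derivative of star Θ via unitarity
  have hstar : ∀ t : ℝ, star (deriv Θ t) = -(star (Θ t) * deriv Θ t * star (Θ t)) := by
    intro t
    have h1 : HasDerivAt (fun s => star (Θ s) * Θ s)
        (star (deriv Θ t) * Θ t + star (Θ t) * deriv Θ t) t :=
      ((hd t).hasDerivAt.star).mul (hd t).hasDerivAt
    have h2 : (fun s => star (Θ s) * Θ s) = fun _ : ℝ => (1 : Matrix (Fin n) (Fin n) ℂ) := by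
      funext s
      rw [Matrix.star_eq_conjTranspose, hU s]
    rw [h2] at h1
    have h3 := (hasDerivAt_const t (1 : Matrix (Fin n) (Fin n) ℂ)).unique h1
    have h4 : star (deriv Θ t) * Θ t = -(star (Θ t) * deriv Θ t) := by
      linear_combination (norm := abel) -h3
    calc star (deriv Θ t) = star (deriv Θ t) * (Θ t * star (Θ t)) := by
          simp only [Matrix.star_eq_conjTranspose, hU' t, mul_one]
      _ = (star (deriv Θ t) * Θ t) * star (Θ t) := by rw [mul_assoc]
      _ = -(star (Θ t) * deriv Θ t) * star (Θ t) := by rw [h4]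
      _ = -(star (Θ t) * deriv Θ t * star (Θ t)) := by rw [neg_mul]
  -- pointwise norm identity
  have key : ∀ t : ℝ, ‖G' t‖ =
      ‖deriv Θ t * (Θ t)⁻¹ + deriv Θ (-t) * (Θ (-t))⁻¹‖ := by
    intro t
    have hGt : G' t = -(  (Θ t)ᴴ *
        (deriv Θ t * (Θ t)⁻¹ + deriv Θ (-t) * (Θ (-t))⁻¹) * Θ (-t)) := by
      simp only [hG'def, hinv, ← Matrix.star_eq_conjTranspose, hstar t]
      have hc : star (Θ (-t)) * Θ (-t) = 1 := by
        rw [Matrix.star_eq_conjTranspose]; exact hU (-t)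
      calc -(star (Θ t) * deriv Θ t * star (Θ t)) * Θ (-t) - star (Θ t) * deriv Θ (-t)
          = -(star (Θ t) * deriv Θ t * star (Θ t) * Θ (-t)
              + star (Θ t) * (deriv Θ (-t) * (star (Θ (-t)) * Θ (-t)))) := by
            rw [hc, mul_one, neg_mul]; abel
        _ = -(star (Θ t) * (deriv Θ t * star (Θ t) + deriv Θ (-t) * star (Θ (-t))) * Θ (-t)) := by
            congr 1
            simp only [mul_add, add_mul, Matrix.mul_assoc]
    rw [hGt, norm_neg]
    exact norm_unitary_conj_aux (Θ t) (Θ (-t)) _ (hU' t) (hU' (-t)) (hnorm t) (hnorm (-t))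
  -- FTC
  have hint : IntervalIntegrable G' MeasureTheory.volume 0 h := hG'cont.intervalIntegrable 0 h
  have ftc : ∫ t in (0:ℝ)..h, G' t = G h - G 0 :=
    intervalIntegral.integral_eq_sub_of_hasDerivAt (fun t _ => hG t) hint
  have hbound : ‖G h - G 0‖ ≤ ∫ t in (0:ℝ)..h, ‖G' t‖ := by
    rw [← ftc]
    exact intervalIntegral.norm_integral_le_integral_norm hh
  have hG0 : G 0 = 1 := by simp [hGdef, neg_zero, hΘ0]
  -- transfer to Θ h - Θ (-h)
  have hfact : Θ h - Θ (-h) = Θ h * (G 0 - G h) := by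
    rw [hG0, mul_sub, mul_one, hGdef]
    simp only [Matrix.star_eq_conjTranspose, ← Matrix.mul_assoc, hU' h, Matrix.one_mul]
  calc ‖Θ h - Θ (-h)‖ = ‖Θ h * (G 0 - G h)‖ := by rw [hfact]
    _ ≤ ‖Θ h‖ * ‖G 0 - G h‖ := norm_mul_le _ _
    _ = ‖G h - G 0‖ := by rw [hnorm h, one_mul, norm_sub_rev]
    _ ≤ ∫ t in (0:ℝ)..h, ‖G' t‖ := hbound
    _ = ∫ t in (0:ℝ)..h, ‖deriv Θ t * (Θ t)⁻¹ + deriv Θ (-t) * (Θ (-t))⁻¹‖ := by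
        apply intervalIntegral.integral_congr
        intro t _
        exact key t
end

section
/- Let A and B be skew-adjoint matrices and define the modified vector field M(t) of Θ(t) = e^{(t/2)b_sB} e^{ta_sA}···e^{tb_1B} e^{ta_1A} e^{−(t/2)(A+B)} by M(t) = Θ'(t)Θ(t)^{-1}. If the time-symmetric splitting Ψ(h) = e^{ha_1A}e^{hb_1B}···e^{ha_sA}e^{hb_sB}e^{ha_sA}···e^{hb_1B}e^{ha_1A} is of order 2p, then ‖Ψ(h) − e^{h(A+B)}‖ ≤ ∫_0^h ‖M(t) + M(−t)‖ dt for all h ≥ 0. -/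
open scoped Matrix Matrix.Norms.L2Operator
open NormedSpace

namespace TwoOpSplitAux

variable {n : ℕ}

local notation "Mat" => Matrix (Fin n) (Fin n) ℂ

lemma skew_smul (c : ℝ) {S : Mat} (hS : Sᴴ = -S) : (c • S)ᴴ = -(c • S) := by
  rw [Matrix.conjTranspose_smul, hS]
  simp

lemma star_exp_skew (c : ℝ) {S : Mat} (hS : Sᴴ = -S) :
    star (exp (c • S)) = exp (-(c • S)) := by
  rw [Matrix.star_eq_conjTranspose, ← Matrix.exp_conjTranspose, skew_smul c hS]

lemma star_exp_skew' {c d : ℝ} {S : Mat} (hS : Sᴴ = -S) (hcd : d = -c) :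
    star (exp (c • S)) = exp (d • S) := by
  rw [star_exp_skew c hS, hcd, neg_smul]

lemma exp_mul_exp_skew {c d e : ℝ} (S : Mat) (hcde : e = c + d) :
    exp (c • S) * exp (d • S) = exp (e • S) := by
  rw [hcde, add_smul]
  exact (Matrix.exp_add_of_commute _ _ (((Commute.refl S).smul_left c).smul_right d)).symm

lemma exp_mem_unitary (c : ℝ) {S : Mat} (hS : Sᴴ = -S) :
    exp (c • S) ∈ unitary Mat := by
  constructor
  · rw [star_exp_skew' hS (show -c = -c from rfl), exp_mul_exp_skew S (show (0:ℝ) = -c + c by ring)]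
    simp
  · rw [star_exp_skew' hS (show -c = -c from rfl), exp_mul_exp_skew S (show (0:ℝ) = c + -c by ring)]
    simp

/-- A `C¹` path of unitary matrices with explicit continuous derivative. -/
def C1U (f f' : ℝ → Mat) : Prop :=
  Continuous f' ∧ (∀ t, HasDerivAt f (f' t) t) ∧ ∀ t, f t ∈ unitary Mat

lemma C1U.continuous {f f' : ℝ → Mat} (h : C1U f f') : Continuous f :=
  continuous_iff_continuousAt.2 fun t => (h.2.1 t).continuousAt

lemma C1U.mul {f f' g g' : ℝ → Mat} (hf : C1U f f') (hg : C1U g g') :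
    C1U (fun t => f t * g t) (fun t => f' t * g t + f t * g' t) := by
  refine ⟨(hf.1.mul hg.continuous).add (hf.continuous.mul hg.1),
    fun t => (hf.2.1 t).mul (hg.2.1 t), fun t => mul_mem (hf.2.2 t) (hg.2.2 t)⟩

lemma C1U.one : C1U (n := n) (fun _ => 1) (fun _ => 0) :=
  ⟨continuous_const, fun t => hasDerivAt_const t 1, fun _ => one_mem _⟩

lemma C1U_exp (c : ℝ) {S : Mat} (hS : Sᴴ = -S) :
    C1U (fun t => exp ((t * c) • S)) (fun t => exp ((t * c) • S) * (c • S)) := by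
  have hsm : ∀ t : ℝ, (t * c) • S = t • (c • S) := fun t => (smul_smul t c S).symm
  refine ⟨?_, fun t => ?_, fun t => exp_mem_unitary (t * c) hS⟩
  · exact ((continuous_iff_continuousAt.2 fun x => by
      simpa only [← hsm] using (hasDerivAt_exp_smul_const (𝕂 := ℝ) (c • S) x).continuousAt).mul
      continuous_const)
  · have := hasDerivAt_exp_smul_const (𝕂 := ℝ) (c • S) t
    simp only [← hsm] at this
    exact this

lemma exists_C1U_prod (l : List ((ℝ → Mat) × (ℝ → Mat)))
    (h : ∀ p ∈ l, C1U p.1 p.2) :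
    ∃ F', C1U (fun t => (l.map (fun p => p.1 t)).prod) F' := by
  induction l with
  | nil => exact ⟨_, C1U.one⟩
  | cons p l ih =>
    obtain ⟨F', hF⟩ := ih fun q hq => h q (List.mem_cons_of_mem _ hq)
    refine ⟨fun t => p.2 t * (List.map (fun p => p.1 t) l).prod + p.1 t * F' t, ?_⟩
    have := (h p (List.mem_cons_self)).mul hF
    simpa only [List.map_cons, List.prod_cons] using this

lemma star_list_prod (l : List Mat) : star l.prod = (l.map star).reverse.prod := by
  induction l with
  | nil => simp
  | cons a l ih => simp [star_mul, ih, List.prod_append]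

lemma exists_C1U_prod' (l : List (ℝ → Mat)) (h : ∀ f ∈ l, ∃ f', C1U f f') :
    ∃ F', C1U (fun t => (l.map (fun f => f t)).prod) F' := by
  induction l with
  | nil => exact ⟨_, C1U.one⟩
  | cons f l ih =>
    obtain ⟨F', hF⟩ := ih fun q hq => h q (List.mem_cons_of_mem _ hq)
    obtain ⟨f', hf⟩ := h f (List.mem_cons_self)
    refine ⟨fun t => f' t * (List.map (fun g => g t) l).prod + f t * F' t, ?_⟩
    have := hf.mul hF
    simpa only [List.map_cons, List.prod_cons] using this

end TwoOpSplitAux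

open TwoOpSplitAux

/-- Local error bound for a time-symmetric splitting method with two
skew-adjoint operators, in terms of the modified vector field M(t) of
Θ(t) = Φ(t)e^{−(t/2)(A+B)}. -/
theorem two_operator_symmetric_splitting_error_bound {n s p : ℕ} (hs : 1 ≤ s)
    (A B : Matrix (Fin n) (Fin n) ℂ) (hA : Aᴴ = -A) (hB : Bᴴ = -B)
    (a b : ℕ → ℝ)
    (Φ Θ Ψ : ℝ → Matrix (Fin n) (Fin n) ℂ)
    (hΦ : ∀ t : ℝ, Φ t =
      exp ((t / 2 * b s) • B) * exp ((t * a s) • A) *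
        (List.ofFn fun j : Fin (s - 1) =>
          exp ((t * b ((j : ℕ) + 1)) • B) * exp ((t * a ((j : ℕ) + 1)) • A)).reverse.prod)
    (hΘ : ∀ t : ℝ, Θ t = Φ t * exp ((-(t / 2)) • (A + B)))
    (hΨ : ∀ h : ℝ, Ψ h =
      (List.ofFn fun j : Fin (s - 1) =>
          exp ((h * a ((j : ℕ) + 1)) • A) * exp ((h * b ((j : ℕ) + 1)) • B)).prod *
        (exp ((h * a s) • A) * exp ((h * b s) • B) * exp ((h * a s) • A)) *
        (List.ofFn fun j : Fin (s - 1) =>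
          exp ((h * b ((j : ℕ) + 1)) • B) * exp ((h * a ((j : ℕ) + 1)) • A)).reverse.prod)
    (horder : ∀ k ≤ 2 * p,
      iteratedDeriv k (fun h : ℝ => Ψ h - exp (h • (A + B))) 0 = 0) :
    ∀ h : ℝ, 0 ≤ h →
      ‖Ψ h - exp (h • (A + B))‖ ≤
        ∫ t in (0:ℝ)..h,
          ‖deriv Θ t * (Θ t)⁻¹ + deriv Θ (-t) * (Θ (-t))⁻¹‖ := by
  classical
  have hAB : (A + B)ᴴ = -(A + B) := by
    rw [Matrix.conjTranspose_add, hA, hB, neg_add]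
  -- build a C¹ unitary structure for Θ
  obtain ⟨Θ', hTc, hTd, hTu⟩ : ∃ Θ', C1U Θ Θ' := by
    set l : List (ℝ → Matrix (Fin n) (Fin n) ℂ) :=
      (fun t => exp ((t / 2 * b s) • B)) :: (fun t => exp ((t * a s) • A)) ::
        ((List.ofFn fun j : Fin (s - 1) => fun t =>
            exp ((t * b ((j : ℕ) + 1)) • B) * exp ((t * a ((j : ℕ) + 1)) • A)).reverse ++
          [fun t => exp ((-(t / 2)) • (A + B))]) with hl
    have hmem : ∀ f ∈ l, ∃ f', C1U f f' := by
      intro f hf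
      rw [hl] at hf
      simp only [List.mem_cons, List.mem_append, List.mem_reverse, List.mem_ofFn,
        List.mem_singleton] at hf
      rcases hf with hf | hf | ⟨j, hj⟩ | hf | hf
      rotate_right
      · simp at hf
      · subst hf
        have h1 : (fun t : ℝ => exp ((t * (b s / 2)) • B)) =
            fun t : ℝ => exp ((t / 2 * b s) • B) := by
          funext t; rw [show t * (b s / 2) = t / 2 * b s by ring]
        exact ⟨_, h1 ▸ C1U_exp (b s / 2) hB⟩
      · subst hf
        exact ⟨_, C1U_exp (a s) hA⟩
      · subst hj
        exact ⟨_, (C1U_exp (b ((j : ℕ) + 1)) hB).mul (C1U_exp (a ((j : ℕ) + 1)) hA)⟩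
      · subst hf
        have h1 : (fun t : ℝ => exp ((t * (-(1 / 2))) • (A + B))) =
            fun t : ℝ => exp ((-(t / 2)) • (A + B)) := by
          funext t; rw [show t * (-(1 / 2)) = -(t / 2) by ring]
        exact ⟨_, h1 ▸ C1U_exp (-(1 / 2)) hAB⟩
    obtain ⟨F, hF⟩ := exists_C1U_prod' l hmem
    refine ⟨F, ?_⟩
    have hfun : Θ = fun t => (l.map fun f => f t).prod := by
      funext t
      rw [hΘ t, hΦ t, hl]
      simp only [List.map_cons, List.map_append, List.map_reverse, List.map_ofFn,
        List.prod_cons, List.prod_append, List.prod_singleton, List.map_nil,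
        List.prod_nil, mul_one, Function.comp_def, mul_assoc]
    rw [hfun]
    exact hF
  have hTcont : Continuous Θ := continuous_iff_continuousAt.2 fun t => (hTd t).continuousAt
  have hstar1 : ∀ t, star (Θ t) * Θ t = 1 := fun t => Unitary.star_mul_self_of_mem (hTu t)
  have hstar2 : ∀ t, Θ t * star (Θ t) = 1 := fun t => Unitary.mul_star_self_of_mem (hTu t)
  have hskew : ∀ t, star (Θ' t) * Θ t + star (Θ t) * Θ' t = 0 := by
    intro t
    have h1 : HasDerivAt (fun u => star (Θ u) * Θ u)
        (star (Θ' t) * Θ t + star (Θ t) * Θ' t) t := ((hTd t).star).mul (hTd t)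
    have h2 : (fun u => star (Θ u) * Θ u) = fun _ => (1 : Matrix (Fin n) (Fin n) ℂ) :=
      funext fun u => hstar1 u
    rw [h2] at h1
    exact h1.unique (hasDerivAt_const t 1)
  set F' : ℝ → Matrix (Fin n) (Fin n) ℂ :=
    fun t => star ((-1 : ℝ) • Θ' (-t)) * Θ t + star (Θ (-t)) * Θ' t with hF'def
  have hDd : ∀ t, HasDerivAt (fun u => star (Θ (-u)) * Θ u) (F' t) t := by
    intro t
    have h1 : HasDerivAt (fun u : ℝ => Θ (-u)) ((-1 : ℝ) • Θ' (-t)) t := by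
      have h2 := (hTd (-t)).scomp t (hasDerivAt_neg t)
      exact h2
    exact (h1.star).mul (hTd t)
  have hFeq : ∀ t, F' t =
      star (Θ (-t)) * ((Θ' t * star (Θ t) + Θ' (-t) * star (Θ (-t))) * Θ t) := by
    intro t
    have hVs : star (Θ' (-t)) = -(star (Θ (-t)) * Θ' (-t) * star (Θ (-t))) := by
      have h1 : star (Θ' (-t)) * Θ (-t) = -(star (Θ (-t)) * Θ' (-t)) :=
        eq_neg_of_add_eq_zero_left (hskew (-t))
      calc star (Θ' (-t)) = star (Θ' (-t)) * (Θ (-t) * star (Θ (-t))) := by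
            rw [hstar2, mul_one]
        _ = star (Θ' (-t)) * Θ (-t) * star (Θ (-t)) := by rw [mul_assoc]
        _ = -(star (Θ (-t)) * Θ' (-t) * star (Θ (-t))) := by rw [h1, neg_mul]
    have hsm : star ((-1 : ℝ) • Θ' (-t)) = -star (Θ' (-t)) := by simp
    rw [hF'def]
    simp only []
    rw [hsm, hVs, neg_neg]
    have hexp : star (Θ (-t)) * ((Θ' t * star (Θ t) + Θ' (-t) * star (Θ (-t))) * Θ t) =
        star (Θ (-t)) * (Θ' t * (star (Θ t) * Θ t)) +
          star (Θ (-t)) * Θ' (-t) * star (Θ (-t)) * Θ t := by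
      noncomm_ring
    rw [hexp, hstar1 t, mul_one]
    exact add_comm _ _
  have hcontF : Continuous F' := by
    have h1 : Continuous fun t : ℝ => Θ (-t) := hTcont.comp continuous_neg
    have h2 : Continuous fun t : ℝ => Θ' (-t) := hTc.comp continuous_neg
    exact (((h2.const_smul (-1 : ℝ)).star).mul hTcont).add ((h1.star).mul hTc)
  intro h h0
  -- Ψ h = star (Φ (-h)) * Φ h
  have hmerge : exp ((h / 2 * b s) • B) * exp ((h / 2 * b s) • B) =
      exp ((h * b s) • B) := exp_mul_exp_skew B (by ring)
  have hstarR : star ((List.ofFn fun j : Fin (s - 1) =>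
        exp ((-h * b ((j : ℕ) + 1)) • B) * exp ((-h * a ((j : ℕ) + 1)) • A)).reverse.prod) =
      (List.ofFn fun j : Fin (s - 1) =>
        exp ((h * a ((j : ℕ) + 1)) • A) * exp ((h * b ((j : ℕ) + 1)) • B)).prod := by
    rw [star_list_prod, List.map_reverse, List.reverse_reverse, List.map_ofFn]
    refine congrArg _ (congrArg _ (funext fun j => ?_))
    simp only [Function.comp_apply]
    rw [star_mul, star_exp_skew' (d := h * a ((j : ℕ) + 1)) hA (by ring),
      star_exp_skew' (d := h * b ((j : ℕ) + 1)) hB (by ring)]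
  have hPsiFact : Ψ h = star (Φ (-h)) * Φ h := by
    rw [hΨ h, hΦ (-h), hΦ h, star_mul, star_mul, hstarR,
      star_exp_skew' hA (show h * a s = -(-h * a s) by ring),
      star_exp_skew' hB (show h / 2 * b s = -(-h / 2 * b s) by ring)]
    simp only [mul_assoc]
    rw [← hmerge]
    simp only [mul_assoc]
  have hE : exp ((h / 2) • (A + B)) ∈ unitary (Matrix (Fin n) (Fin n) ℂ) :=
    exp_mem_unitary _ hAB
  have hEE : exp ((h / 2) • (A + B)) * exp ((h / 2) • (A + B)) =
      exp (h • (A + B)) := exp_mul_exp_skew _ (by ring)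
  have hEinv1 : exp ((h / 2) • (A + B)) * exp ((-(h / 2)) • (A + B)) = 1 := by
    rw [exp_mul_exp_skew (A + B) (show (0 : ℝ) = h / 2 + -(h / 2) by ring)]
    simp
  have hEinv2 : exp ((-(h / 2)) • (A + B)) * exp ((h / 2) • (A + B)) = 1 := by
    rw [exp_mul_exp_skew (A + B) (show (0 : ℝ) = -(h / 2) + h / 2 by ring)]
    simp
  have hTheta : Ψ h = exp ((h / 2) • (A + B)) *
      ((star (Θ (-h)) * Θ h) * exp ((h / 2) • (A + B))) := by
    rw [hΘ h, hΘ (-h), star_mul, star_exp_skew' hAB (show -(h / 2) = -(-(-h / 2)) by ring),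
      hPsiFact]
    simp only [mul_assoc]
    rw [hEinv2, mul_one, ← mul_assoc, hEinv1, one_mul]
  have hfact : Ψ h - exp (h • (A + B)) = exp ((h / 2) • (A + B)) *
      ((star (Θ (-h)) * Θ h - 1) * exp ((h / 2) • (A + B))) := by
    rw [hTheta, ← hEE]
    noncomm_ring
  have hFTC : ∫ t in (0:ℝ)..h, F' t = star (Θ (-h)) * Θ h - 1 := by
    rw [intervalIntegral.integral_eq_sub_of_hasDerivAt
      (fun t (_ : t ∈ Set.uIcc 0 h) => hDd t) (hcontF.intervalIntegrable 0 h)]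
    simp [hstar1 0]
  calc ‖Ψ h - exp (h • (A + B))‖ = ‖star (Θ (-h)) * Θ h - 1‖ := by
        rw [hfact, CStarRing.norm_mem_unitary_mul _ hE, CStarRing.norm_mul_mem_unitary _ hE]
    _ = ‖∫ t in (0:ℝ)..h, F' t‖ := by rw [hFTC]
    _ ≤ ∫ t in (0:ℝ)..h, ‖F' t‖ := intervalIntegral.norm_integral_le_integral_norm h0
    _ = ∫ t in (0:ℝ)..h,
          ‖deriv Θ t * (Θ t)⁻¹ + deriv Θ (-t) * (Θ (-t))⁻¹‖ := by
        refine intervalIntegral.integral_congr fun t _ => ?_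
        rw [(hTd t).deriv, (hTd (-t)).deriv, Matrix.inv_eq_left_inv (hstar1 t),
          Matrix.inv_eq_left_inv (hstar1 (-t)), hFeq t,
          CStarRing.norm_mem_unitary_mul _ (Unitary.star_mem (hTu (-t))),
          CStarRing.norm_mul_mem_unitary _ (hTu t)]
end
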